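/- arXiv:1308.2867 — 3 statements merged into one kernel-verified Lean document; each statement's English description precedes it below -/
import Mathlib

section
/- Let f be standard self-concordant on an open convex set dom f ⊆ ℝⁿ, g : ℝⁿ → ℝ ∪ {+∞} proper, lower semicontinuous and convex, F := f + g. Fix x ∈ dom F with ∇²f(x) positive definite and v ∈ ∂g(x), and set λ(x) := ‖∇f(x) + v‖*_x. Then every y ∈ dom F with F(y) ≤ F(x) and y ≠ x satisfies ω(‖y − x‖_x)/‖y − x‖_x ≤ λ(x), where ω(t) := t − ln(1+t). Consequently, if λ(x) < 1, the sublevel set { y ∈ dom F : F(y) ≤ F(x) } is bounded. -/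
open Matrix Set Filter Topology

noncomputable section

variable {n : ℕ}

/-- Weighted (semi)norm induced by a matrix `H`: `‖z‖_H = √(zᵀ H z)`. -/
def mNorm (H : Matrix (Fin n) (Fin n) ℝ) (z : Fin n → ℝ) : ℝ :=
  Real.sqrt (z ⬝ᵥ H.mulVec z)

/-- Dual weighted norm, `‖z‖*_H = √(zᵀ H⁻¹ z)`. -/
def mDualNorm (H : Matrix (Fin n) (Fin n) ℝ) (z : Fin n → ℝ) : ℝ :=
  Real.sqrt (z ⬝ᵥ H⁻¹.mulVec z)

/-- A function `g : ℝⁿ → ℝ ∪ {+∞}` (modelled with values in `EReal`) is proper. -/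
def EProper (g : (Fin n → ℝ) → EReal) : Prop :=
  (∀ x, g x ≠ ⊥) ∧ ∃ x, g x ≠ ⊤

/-- Convexity of an `EReal`-valued function on `ℝⁿ`. -/
def EConvex (g : (Fin n → ℝ) → EReal) : Prop :=
  ∀ x y : Fin n → ℝ, ∀ a b : ℝ, 0 ≤ a → 0 ≤ b → a + b = 1 →
    g (a • x + b • y) ≤ (a : EReal) * g x + (b : EReal) * g y

/-- `v` is a subgradient of `g` at `x`. -/
def ESubgradAt (g : (Fin n → ℝ) → EReal) (v x : Fin n → ℝ) : Prop :=
  g x ≠ ⊤ ∧ ∀ y, g x + ((v ⬝ᵥ (y - x) : ℝ) : EReal) ≤ g y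

/-- Objective of the proximal subproblem `g(x) + ½ xᵀHx − uᵀx`. -/
def proxObj (H : Matrix (Fin n) (Fin n) ℝ) (g : (Fin n → ℝ) → EReal)
    (u x : Fin n → ℝ) : EReal :=
  g x + ((1 / 2 * (x ⬝ᵥ H.mulVec x) - u ⬝ᵥ x : ℝ) : EReal)

/-- `p` solves the proximal subproblem, i.e. `p = P^g_H(u)`. -/
def IsProxPt (H : Matrix (Fin n) (Fin n) ℝ) (g : (Fin n → ℝ) → EReal)
    (u p : Fin n → ℝ) : Prop :=
  ∀ x, proxObj H g u p ≤ proxObj H g u x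

/-- The continuous linear map `y ↦ vᵀy`. -/
def dotCLM (v : Fin n → ℝ) : (Fin n → ℝ) →L[ℝ] ℝ :=
  LinearMap.toContinuousLinearMap
    { toFun := fun y => v ⬝ᵥ y
      map_add' := fun a b => dotProduct_add v a b
      map_smul' := fun c a => by simp }

/-- `f` is standard self-concordant on the open convex set `D`. -/
def StdSelfConcordantOn (D : Set (Fin n → ℝ)) (f : (Fin n → ℝ) → ℝ) : Prop :=
  IsOpen D ∧ Convex ℝ D ∧ ConvexOn ℝ D f ∧ ContDiffOn ℝ 3 f D ∧
    ∀ x ∈ D, ∀ v : Fin n → ℝ, ∀ t : ℝ, x + t • v ∈ D →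
      |iteratedDeriv 3 (fun s : ℝ => f (x + s • v)) t| ≤
        2 * iteratedDeriv 2 (fun s : ℝ => f (x + s • v)) t ^ ((3 : ℝ) / 2)

open scoped Classical in
/-- The extended objective `F = f + g`, equal to `+∞` outside `dom f`. -/
def Fext (D : Set (Fin n → ℝ)) (f : (Fin n → ℝ) → ℝ) (g : (Fin n → ℝ) → EReal)
    (x : Fin n → ℝ) : EReal :=
  if x ∈ D then (f x : EReal) + g x else ⊤

def omega (t : ℝ) : ℝ := t - Real.log (1 + t)

def omegaStar (t : ℝ) : ℝ := -t - Real.log (1 - t)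

lemma dotCLM_apply (v y : Fin n → ℝ) : dotCLM v y = v ⬝ᵥ y := rfl

-- Cauchy-Schwarz for psd matrix
lemma cs_sq {H : Matrix (Fin n) (Fin n) ℝ} (hH : H.PosSemidef) (hsym : Hᵀ = H)
    (w z : Fin n → ℝ) :
    (w ⬝ᵥ H.mulVec z) ^ 2 ≤ (w ⬝ᵥ H.mulVec w) * (z ⬝ᵥ H.mulVec z) := by
  have key : ∀ t : ℝ, 0 ≤ (z ⬝ᵥ H.mulVec z) * (t * t) + (2 * (w ⬝ᵥ H.mulVec z)) * t
      + (w ⬝ᵥ H.mulVec w) := by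
    intro t
    have h0 := hH.dotProduct_mulVec_nonneg (w + t • z)
    have hstar : star (w + t • z) = w + t • z := by
      funext i; simp
    rw [hstar] at h0
    have hswap : z ⬝ᵥ H.mulVec w = w ⬝ᵥ H.mulVec z := by
      have : H.vecMul z = H.mulVec z := by
        conv_lhs => rw [← hsym]
        rw [Matrix.vecMul_transpose]
      rw [dotProduct_mulVec, this, dotProduct_comm]
    calc (0:ℝ) ≤ (w + t • z) ⬝ᵥ H.mulVec (w + t • z) := h0
      _ = (z ⬝ᵥ H.mulVec z) * (t * t) + (2 * (w ⬝ᵥ H.mulVec z)) * t + (w ⬝ᵥ H.mulVec w) := by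
        simp [Matrix.mulVec_add, dotProduct_add, add_dotProduct, Matrix.mulVec_smul,
          dotProduct_smul, smul_dotProduct, smul_eq_mul, hswap]
        ring
  have := discrim_le_zero key
  rw [discrim] at this
  nlinarith [this]

lemma psd_dot_nonneg {H : Matrix (Fin n) (Fin n) ℝ} (hH : H.PosSemidef) (z : Fin n → ℝ) :
    0 ≤ z ⬝ᵥ H.mulVec z := by
  have := hH.dotProduct_mulVec_nonneg z
  have hstar : star z = z := by funext i; simp
  rwa [hstar] at this

lemma pd_dot_pos {H : Matrix (Fin n) (Fin n) ℝ} (hH : H.PosDef) {z : Fin n → ℝ} (hz : z ≠ 0) :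
    0 < z ⬝ᵥ H.mulVec z := by
  have := hH.dotProduct_mulVec_pos hz
  have hstar : star z = z := by funext i; simp
  rwa [hstar] at this

/-- Cauchy–Schwarz: `|a ⬝ᵥ z| ≤ ‖a‖*_H ‖z‖_H`. -/
lemma abs_dot_le {H : Matrix (Fin n) (Fin n) ℝ} (hH : H.PosDef) (a z : Fin n → ℝ) :
    |a ⬝ᵥ z| ≤ mDualNorm H a * mNorm H z := by
  classical
  have hdet : IsUnit H.det := hH.det_pos.ne'.isUnit
  have hsym : Hᵀ = H := by
    have := hH.1
    rwa [Matrix.IsHermitian, conjTranspose_eq_transpose_of_trivial] at this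
  set w := H⁻¹.mulVec a with hw
  have hHw : H.mulVec w = a := by
    rw [hw, Matrix.mulVec_mulVec, Matrix.mul_nonsing_inv _ hdet, Matrix.one_mulVec]
  have h1 : w ⬝ᵥ H.mulVec z = a ⬝ᵥ z := by
    rw [dotProduct_mulVec]
    have : H.vecMul w = H.mulVec w := by
      conv_lhs => rw [← hsym]
      rw [Matrix.vecMul_transpose]
    rw [this, hHw]
  have h2 : w ⬝ᵥ H.mulVec w = a ⬝ᵥ H⁻¹.mulVec a := by
    rw [hHw, dotProduct_comm]
  have hcs := cs_sq hH.posSemidef hsym w z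
  rw [h1, h2] at hcs
  have hda : 0 ≤ a ⬝ᵥ H⁻¹.mulVec a := psd_dot_nonneg hH.inv.posSemidef a
  have hdz : 0 ≤ z ⬝ᵥ H.mulVec z := psd_dot_nonneg hH.posSemidef z
  have : |a ⬝ᵥ z| = Real.sqrt ((a ⬝ᵥ z) ^ 2) := (Real.sqrt_sq_eq_abs _).symm
  rw [this, mDualNorm, mNorm, ← Real.sqrt_mul hda]
  exact Real.sqrt_le_sqrt hcs

/-- Smallest-eigenvalue style bound. -/
lemma pd_lower {H : Matrix (Fin n) (Fin n) ℝ} (hH : H.PosDef) :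
    ∃ μ > 0, ∀ z : Fin n → ℝ, μ * ‖z‖ ^ 2 ≤ z ⬝ᵥ H.mulVec z := by
  rcases Nat.eq_zero_or_pos n with hn | hn
  · refine ⟨1, one_pos, fun z => ?_⟩
    subst hn
    have h0 : z ⬝ᵥ H.mulVec z = 0 := by simp [dotProduct]
    have h1 : ‖z‖ = 0 := by rw [Subsingleton.elim z 0]; simp
    rw [h0, h1]; norm_num
  · have : Nontrivial (Fin n → ℝ) := by
      have : Nonempty (Fin n) := ⟨⟨0, hn⟩⟩
      infer_instance
    have hq : Continuous fun z : Fin n → ℝ => z ⬝ᵥ H.mulVec z := by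
      simp only [dotProduct, Matrix.mulVec]
      fun_prop
    have hsph : (Metric.sphere (0 : Fin n → ℝ) 1).Nonempty :=
      NormedSpace.sphere_nonempty.2 one_pos.le
    obtain ⟨z₀, hz₀s, hz₀min⟩ :=
      (isCompact_sphere (0 : Fin n → ℝ) 1).exists_isMinOn hsph hq.continuousOn
    have hz₀norm : ‖z₀‖ = 1 := by simpa using hz₀s
    have hz₀ne : z₀ ≠ 0 := by
      intro h; rw [h] at hz₀norm; simp at hz₀norm
    refine ⟨z₀ ⬝ᵥ H.mulVec z₀, pd_dot_pos hH hz₀ne, fun z => ?_⟩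
    rcases eq_or_ne z 0 with rfl | hz
    · simp
    · have hnz : (0:ℝ) < ‖z‖ := norm_pos_iff.2 hz
      have hmem : ‖z‖⁻¹ • z ∈ Metric.sphere (0 : Fin n → ℝ) 1 := by
        simp [norm_smul, abs_of_pos (inv_pos.2 hnz), inv_mul_cancel₀ hnz.ne']
      have hmin : z₀ ⬝ᵥ H.mulVec z₀ ≤ (‖z‖⁻¹ • z) ⬝ᵥ H.mulVec (‖z‖⁻¹ • z) := hz₀min hmem
      have hscale : (‖z‖⁻¹ • z) ⬝ᵥ H.mulVec (‖z‖⁻¹ • z) = ‖z‖⁻¹ ^ 2 * (z ⬝ᵥ H.mulVec z) := by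
        rw [Matrix.mulVec_smul, dotProduct_smul, smul_dotProduct]
        simp [smul_eq_mul]; ring
      rw [hscale] at hmin
      have h2 : (z₀ ⬝ᵥ H.mulVec z₀) * ‖z‖ ^ 2 ≤ ‖z‖⁻¹ ^ 2 * (z ⬝ᵥ H.mulVec z) * ‖z‖ ^ 2 := by
        exact mul_le_mul_of_nonneg_right hmin (by positivity)
      calc (z₀ ⬝ᵥ H.mulVec z₀) * ‖z‖ ^ 2 ≤ ‖z‖⁻¹ ^ 2 * (z ⬝ᵥ H.mulVec z) * ‖z‖ ^ 2 := h2
        _ = z ⬝ᵥ H.mulVec z := by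
          field_simp

/-- Key self-concordance lower bound. -/
lemma sc_lower_bound (D : Set (Fin n → ℝ)) (f : (Fin n → ℝ) → ℝ)
    (f' : (Fin n → ℝ) → Fin n → ℝ) (f'' : (Fin n → ℝ) → Matrix (Fin n) (Fin n) ℝ)
    (hf : StdSelfConcordantOn D f)
    (hgrad : ∀ x ∈ D, HasFDerivAt f (dotCLM (f' x)) x)
    (hhess : ∀ x ∈ D,
      HasFDerivAt f' (LinearMap.toContinuousLinearMap (f'' x).mulVecLin) x)
    (x y : Fin n → ℝ) (hx : x ∈ D) (hy : y ∈ D)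
    (hpos : 0 < (y - x) ⬝ᵥ (f'' x).mulVec (y - x)) :
    f x + f' x ⬝ᵥ (y - x) + omega (mNorm (f'' x) (y - x)) ≤ f y := by
  obtain ⟨hDo, hDc, hfc, hf3, hsc⟩ := hf
  set u := y - x with hu
  set γ : ℝ → (Fin n → ℝ) := fun t => x + t • u with hγ
  set T : Set ℝ := {t | γ t ∈ D} with hT
  set φ : ℝ → ℝ := fun s => f (x + s • u) with hφ
  have hγcont : Continuous γ := by fun_prop
  have hTo : IsOpen T := hDo.preimage hγcont
  have h01 : Icc (0:ℝ) 1 ⊆ T := by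
    intro t ht
    have : γ t = (1 - t) • x + t • y := by
      funext i
      simp [hγ, hu, smul_eq_mul]
      ring
    simp only [hT, Set.mem_setOf_eq, this]
    exact hDc hx hy (by linarith [ht.1, ht.2]) ht.1 (by ring)
  have h0T : (0:ℝ) ∈ T := h01 ⟨le_refl 0, zero_le_one⟩
  have hγ0 : γ 0 = x := by simp [hγ]
  have hγ1 : γ 1 = y := by
    funext i; simp [hγ, hu]
  -- derivative of γ
  have hγd : ∀ t : ℝ, HasDerivAt γ u t := by
    intro t
    have := ((hasDerivAt_id t).smul_const u).const_add x
    simpa [hγ] using this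
  -- first derivative of φ
  set A : ℝ → ℝ := fun s => u ⬝ᵥ f' (γ s) with hA
  set ψ : ℝ → ℝ := fun s => u ⬝ᵥ (f'' (γ s)).mulVec u with hψ
  have hφd : ∀ t ∈ T, HasDerivAt φ (A t) t := by
    intro t ht
    have h1 : HasDerivAt (fun s => f (γ s)) (dotCLM (f' (γ t)) u) t :=
      (hgrad (γ t) ht).comp_hasDerivAt t (hγd t)
    have : dotCLM (f' (γ t)) u = A t := by
      rw [dotCLM_apply, hA, dotProduct_comm]
    rwa [this] at h1
  have hAd : ∀ t ∈ T, HasDerivAt A (ψ t) t := by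
    intro t ht
    have h1 : HasDerivAt (fun s => f' (γ s))
        ((LinearMap.toContinuousLinearMap (f'' (γ t)).mulVecLin) u) t :=
      (hhess (γ t) ht).comp_hasDerivAt t (hγd t)
    have h2 : HasDerivAt (fun s => dotCLM u (f' (γ s)))
        (dotCLM u ((LinearMap.toContinuousLinearMap (f'' (γ t)).mulVecLin) u)) t :=
      (dotCLM u).hasFDerivAt.comp_hasDerivAt t h1
    exact h2
  -- identification with iterated derivatives
  have hd1 : Set.EqOn (deriv φ) A T := fun t ht => (hφd t ht).deriv
  have hd2 : ∀ t ∈ T, iteratedDeriv 2 φ t = ψ t := by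
    intro t ht
    have hev : deriv φ =ᶠ[𝓝 t] A := Filter.eventuallyEq_of_mem (hTo.mem_nhds ht) hd1
    rw [show (2:ℕ) = 1 + 1 from rfl, iteratedDeriv_succ, iteratedDeriv_one]
    rw [hev.deriv_eq]
    exact (hAd t ht).deriv
  have hd3 : ∀ t ∈ T, iteratedDeriv 3 φ t = deriv ψ t := by
    intro t ht
    have hev : iteratedDeriv 2 φ =ᶠ[𝓝 t] ψ :=
      Filter.eventuallyEq_of_mem (hTo.mem_nhds ht) hd2
    rw [iteratedDeriv_succ, hev.deriv_eq]
  -- differentiability of ψ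
  have hφ3 : ContDiffOn ℝ 3 φ T := by
    have hγ3 : ContDiff ℝ 3 γ := by
      apply contDiff_const.add
      exact contDiff_id.smul contDiff_const
    exact hf3.comp hγ3.contDiffOn (fun t ht => ht)
  have hψd : ∀ t ∈ T, HasDerivAt ψ (iteratedDeriv 3 φ t) t := by
    intro t ht
    have hdiffW : DifferentiableOn ℝ (iteratedDerivWithin 2 φ T) T :=
      hφ3.differentiableOn_iteratedDerivWithin (by norm_num) hTo.uniqueDiffOn
    have heqW : Set.EqOn (iteratedDerivWithin 2 φ T) (iteratedDeriv 2 φ) T := by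
      intro s hs
      rw [iteratedDerivWithin_eq_iteratedFDerivWithin, iteratedDeriv_eq_iteratedFDeriv,
        iteratedFDerivWithin_of_isOpen 2 hTo hs]
    have hdiff2 : DifferentiableAt ℝ (iteratedDeriv 2 φ) t := by
      have h := (hdiffW t ht).differentiableAt (hTo.mem_nhds ht)
      exact h.congr_of_eventuallyEq
        (Filter.eventuallyEq_of_mem (hTo.mem_nhds ht) (fun s hs => (heqW hs).symm))
    have hdiffψ : DifferentiableAt ℝ ψ t := by
      refine hdiff2.congr_of_eventuallyEq ?_
      exact Filter.eventuallyEq_of_mem (hTo.mem_nhds ht) (fun s hs => (hd2 s hs).symm)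
    have hder : deriv ψ t = iteratedDeriv 3 φ t := (hd3 t ht).symm
    rw [← hder]
    exact hdiffψ.hasDerivAt
  have hsc' : ∀ t ∈ T, |iteratedDeriv 3 φ t| ≤ 2 * ψ t ^ ((3:ℝ)/2) := by
    intro t ht
    have h := hsc x hx u t ht
    rw [← hφ] at h
    rw [hd2 t ht] at h
    exact h
  set r : ℝ := Real.sqrt (ψ 0) with hr
  have hψ0pos : 0 < ψ 0 := by simpa [hψ, hγ0] using hpos
  have hrpos : 0 < r := Real.sqrt_pos.2 hψ0pos
  have key : ∀ a, a ∈ Icc (0:ℝ) 1 → (∀ s ∈ Icc (0:ℝ) a, 0 < ψ s) →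
      ∀ t ∈ Icc (0:ℝ) a, ((r⁻¹ + t)⁻¹) ^ 2 ≤ ψ t := by
    intro a ha hpos' t ht
    set c : ℝ → ℝ := fun s => (Real.sqrt (ψ s))⁻¹ with hc
    have hIccT : Icc (0:ℝ) a ⊆ T := fun s hs => h01 ⟨hs.1, hs.2.trans ha.2⟩
    have hcd : ∀ s ∈ Icc (0:ℝ) a, HasDerivWithinAt c
        (-(iteratedDeriv 3 φ s / (2 * Real.sqrt (ψ s))) / (Real.sqrt (ψ s)) ^ 2)
        (Icc 0 a) s := by
      intro s hs
      have h1 : HasDerivAt (fun w => Real.sqrt (ψ w))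
          (iteratedDeriv 3 φ s / (2 * Real.sqrt (ψ s))) s :=
        (hψd s (hIccT hs)).sqrt (hpos' s hs).ne'
      exact (h1.inv (Real.sqrt_pos.2 (hpos' s hs)).ne').hasDerivWithinAt
    have hbound : ∀ s ∈ Icc (0:ℝ) a,
        ‖-(iteratedDeriv 3 φ s / (2 * Real.sqrt (ψ s))) / (Real.sqrt (ψ s)) ^ 2‖ ≤ 1 := by
      intro s hs
      have hψs := hpos' s hs
      have hsq : 0 < Real.sqrt (ψ s) := Real.sqrt_pos.2 hψs
      have hb := hsc' s (hIccT hs)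
      have hrpow : ψ s ^ ((3:ℝ)/2) = ψ s * Real.sqrt (ψ s) := by
        rw [show ((3:ℝ)/2) = 1 + 1/2 by norm_num, Real.rpow_add hψs, Real.rpow_one,
          ← Real.sqrt_eq_rpow]
      have h2 : |iteratedDeriv 3 φ s| ≤ 2 * (ψ s * Real.sqrt (ψ s)) := by
        rw [← hrpow]; exact hb
      rw [Real.norm_eq_abs, abs_div, abs_neg, abs_div,
        abs_of_pos (by positivity : (0:ℝ) < 2 * Real.sqrt (ψ s)),
        abs_of_pos (by positivity : (0:ℝ) < Real.sqrt (ψ s) ^ 2), div_div,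
        div_le_one (by positivity)]
      calc |iteratedDeriv 3 φ s| ≤ 2 * (ψ s * Real.sqrt (ψ s)) := h2
        _ = 2 * Real.sqrt (ψ s) * Real.sqrt (ψ s) ^ 2 := by
            rw [Real.sq_sqrt hψs.le]; ring
    have h0mem : (0:ℝ) ∈ Icc (0:ℝ) a := ⟨le_refl 0, ha.1⟩
    have hmvt := (convex_Icc (0:ℝ) a).norm_image_sub_le_of_norm_hasDerivWithin_le
      hcd hbound h0mem ht
    have hct : c t ≤ r⁻¹ + t := by
      have h0 : c 0 = r⁻¹ := by rw [hr]
      have habs : |c t - c 0| ≤ t := by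
        rw [Real.norm_eq_abs, Real.norm_eq_abs, sub_zero, one_mul,
          abs_of_nonneg ht.1] at hmvt
        exact hmvt
      have := (abs_le.1 habs).2
      rw [h0] at this
      linarith
    have hctpos : 0 < c t := inv_pos.2 (Real.sqrt_pos.2 (hpos' t ht))
    have hden : 0 < r⁻¹ + t := lt_of_lt_of_le hctpos hct
    have h3 : (r⁻¹ + t)⁻¹ ≤ Real.sqrt (ψ t) := by
      have h4 := inv_anti₀ hctpos hct
      rwa [hc, inv_inv] at h4
    calc ((r⁻¹ + t)⁻¹) ^ 2 ≤ Real.sqrt (ψ t) ^ 2 :=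
          pow_le_pow_left₀ (inv_pos.2 hden).le h3 2
      _ = ψ t := Real.sq_sqrt (hpos' t ht).le
  -- bootstrap positivity of ψ on [0,1]
  set S : Set ℝ := {a | a ∈ Icc (0:ℝ) 1 ∧ ∀ s ∈ Icc (0:ℝ) a, 0 < ψ s} with hS
  have hS0 : (0:ℝ) ∈ S := ⟨⟨le_refl 0, zero_le_one⟩, fun s hs => by
    have h : s = 0 := le_antisymm hs.2 hs.1
    rw [h]; exact hψ0pos⟩
  have hSne : S.Nonempty := ⟨0, hS0⟩
  have hSbdd : BddAbove S := ⟨1, fun a ha => ha.1.2⟩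
  set a0 : ℝ := sSup S with ha0
  have h0a : 0 ≤ a0 := le_csSup hSbdd hS0
  have ha1 : a0 ≤ 1 := csSup_le hSne (fun b hb => hb.1.2)
  have hIcoψ : ∀ s, 0 ≤ s → s < a0 → ((r⁻¹ + s)⁻¹) ^ 2 ≤ ψ s ∧ 0 < ψ s := by
    intro s hs0 hsa
    obtain ⟨a, haS, hsa'⟩ := exists_lt_of_lt_csSup hSne hsa
    have hsIcc : s ∈ Icc (0:ℝ) a := ⟨hs0, hsa'.le⟩
    exact ⟨key a haS.1 haS.2 s hsIcc, haS.2 s hsIcc⟩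
  have hψcont : ∀ t ∈ T, ContinuousAt ψ t := fun t ht => (hψd t ht).continuousAt
  have ha0T : a0 ∈ T := h01 ⟨h0a, ha1⟩
  have hstar : ((r⁻¹ + a0)⁻¹) ^ 2 ≤ ψ a0 := by
    rcases eq_or_lt_of_le h0a with h | h
    · rw [← h, add_zero, inv_inv, hr, Real.sq_sqrt hψ0pos.le]
    · have hψt : Tendsto ψ (𝓝[<] a0) (𝓝 (ψ a0)) :=
        ((hψcont a0 ha0T).tendsto).mono_left nhdsWithin_le_nhds
      have hbc : ContinuousAt (fun s => ((r⁻¹ + s)⁻¹) ^ 2) a0 := by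
        have hpd : 0 < r⁻¹ + a0 := add_pos (inv_pos.2 hrpos) h
        exact (((continuous_const.add continuous_id).continuousAt).inv₀ hpd.ne').pow 2
      have hbt : Tendsto (fun s => ((r⁻¹ + s)⁻¹) ^ 2) (𝓝[<] a0) (𝓝 (((r⁻¹ + a0)⁻¹) ^ 2)) :=
        hbc.tendsto.mono_left nhdsWithin_le_nhds
      refine le_of_tendsto_of_tendsto hbt hψt ?_
      filter_upwards [self_mem_nhdsWithin,
        (eventually_gt_nhds h).filter_mono nhdsWithin_le_nhds] with s hs1 hs2
      exact (hIcoψ s hs2.le hs1).1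
  have hstarpos : 0 < ψ a0 := lt_of_lt_of_le (by positivity) hstar
  have ha0S : a0 ∈ S := ⟨⟨h0a, ha1⟩, fun s hs => by
    rcases lt_or_eq_of_le hs.2 with h | h
    · exact (hIcoψ s hs.1 h).2
    · rw [h]; exact hstarpos⟩
  have ha01 : a0 = 1 := by
    by_contra hne
    have hlt : a0 < 1 := lt_of_le_of_ne ha1 hne
    have hev : {s | 0 < ψ s} ∈ 𝓝 a0 :=
      (hψcont a0 ha0T).preimage_mem_nhds (isOpen_Ioi.mem_nhds hstarpos)
    obtain ⟨ε, hε, hball⟩ := Metric.mem_nhds_iff.1 hev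
    set a' : ℝ := min (a0 + ε / 2) 1 with ha'
    have ha'S : a' ∈ S := by
      refine ⟨⟨le_min (by linarith) zero_le_one, min_le_right _ 1⟩, fun s hs => ?_⟩
      rcases le_or_gt s a0 with h | h
      · exact ha0S.2 s ⟨hs.1, h⟩
      · apply hball
        rw [Metric.mem_ball, Real.dist_eq, abs_of_pos (by linarith)]
        have : s ≤ a0 + ε / 2 := hs.2.trans (min_le_left _ _)
        linarith
    have h1 : a' ≤ a0 := le_csSup hSbdd ha'S
    have h2 : a0 < a' := lt_min (by linarith) hlt
    linarith
  have hψpos1 : ∀ s ∈ Icc (0:ℝ) 1, 0 < ψ s := ha01 ▸ ha0S.2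
  have hb1 : ∀ t ∈ Icc (0:ℝ) 1, ((r⁻¹ + t)⁻¹) ^ 2 ≤ ψ t :=
    key 1 ⟨zero_le_one, le_refl 1⟩ hψpos1
  -- first integration
  set m : ℝ → ℝ := fun t => A t + (r⁻¹ + t)⁻¹ with hm
  have hmd : ∀ t ∈ Icc (0:ℝ) 1, HasDerivAt m (ψ t - ((r⁻¹ + t)⁻¹) ^ 2) t := by
    intro t ht
    have hden : 0 < r⁻¹ + t := add_pos_of_pos_of_nonneg (inv_pos.2 hrpos) ht.1
    have h2 : HasDerivAt (fun t : ℝ => r⁻¹ + t) 1 t := (hasDerivAt_id t).const_add r⁻¹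
    have h1 : HasDerivAt (fun t : ℝ => (r⁻¹ + t)⁻¹) (-1 / (r⁻¹ + t) ^ 2) t := by
      have h4 := (hasDerivAt_inv hden.ne').comp t h2
      exact h4.congr_deriv (by ring)
    have h3 := (hAd t (h01 ht)).add h1
    refine h3.congr_deriv ?_
    rw [inv_pow]
    ring
  have hmono : MonotoneOn m (Icc (0:ℝ) 1) := by
    apply monotoneOn_of_deriv_nonneg (convex_Icc 0 1)
    · intro t ht; exact (hmd t ht).continuousAt.continuousWithinAt
    · intro t ht
      rw [interior_Icc] at ht
      exact (hmd t ⟨ht.1.le, ht.2.le⟩).differentiableAt.differentiableWithinAt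
    · intro t ht
      rw [interior_Icc] at ht
      have ht' : t ∈ Icc (0:ℝ) 1 := ⟨ht.1.le, ht.2.le⟩
      rw [(hmd t ht').deriv]
      have := hb1 t ht'
      linarith
  have hAlower : ∀ t ∈ Icc (0:ℝ) 1, A 0 + r - (r⁻¹ + t)⁻¹ ≤ A t := by
    intro t ht
    have h := hmono ⟨le_refl 0, zero_le_one⟩ ht ht.1
    simp only [hm, add_zero, inv_inv] at h
    linarith
  -- second integration
  set N : ℝ → ℝ := fun t => φ t - (A 0 + r) * t + Real.log (r⁻¹ + t) with hN
  have hNd : ∀ t ∈ Icc (0:ℝ) 1, HasDerivAt N (A t - (A 0 + r) + (r⁻¹ + t)⁻¹) t := by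
    intro t ht
    have hden : 0 < r⁻¹ + t := add_pos_of_pos_of_nonneg (inv_pos.2 hrpos) ht.1
    have h2 : HasDerivAt (fun t : ℝ => r⁻¹ + t) 1 t := (hasDerivAt_id t).const_add r⁻¹
    have h1 : HasDerivAt (fun t : ℝ => Real.log (r⁻¹ + t)) (r⁻¹ + t)⁻¹ t := by
      simpa using h2.log hden.ne'
    have h3 : HasDerivAt (fun t : ℝ => (A 0 + r) * t) (A 0 + r) t := by
      simpa using (hasDerivAt_id t).const_mul (A 0 + r)
    exact ((hφd t (h01 ht)).sub h3).add h1
  have hNmono : MonotoneOn N (Icc (0:ℝ) 1) := by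
    apply monotoneOn_of_deriv_nonneg (convex_Icc 0 1)
    · intro t ht; exact (hNd t ht).continuousAt.continuousWithinAt
    · intro t ht
      rw [interior_Icc] at ht
      exact (hNd t ⟨ht.1.le, ht.2.le⟩).differentiableAt.differentiableWithinAt
    · intro t ht
      rw [interior_Icc] at ht
      have ht' : t ∈ Icc (0:ℝ) 1 := ⟨ht.1.le, ht.2.le⟩
      rw [(hNd t ht').deriv]
      have := hAlower t ht'
      linarith
  have hN01 : N 0 ≤ N 1 := hNmono ⟨le_refl 0, zero_le_one⟩ ⟨zero_le_one, le_refl 1⟩ zero_le_one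
  simp only [hN, mul_zero, mul_one, sub_zero, add_zero] at hN01
  -- put everything together
  have hlog : Real.log (r⁻¹ + 1) - Real.log r⁻¹ = Real.log (1 + r) := by
    rw [← Real.log_div (by positivity : (0:ℝ) < r⁻¹ + 1).ne' (inv_ne_zero hrpos.ne')]
    congr 1
    field_simp
  have hφ0 : φ 0 = f x := by
    have h : x + (0:ℝ) • u = x := by simp
    rw [hφ]
    simp only [h]
  have hφ1 : φ 1 = f y := by
    have h : x + (1:ℝ) • u = y := by funext i; simp [hu]
    rw [hφ]
    simp only [h]
  have hmn : mNorm (f'' x) u = r := by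
    rw [mNorm, hr]
    congr 1
    simp [hψ, hγ0]
  have hA0 : A 0 = f' x ⬝ᵥ u := by
    rw [hA]
    simp only [hγ0]
    exact dotProduct_comm u (f' x)
  rw [hmn, omega]
  rw [hφ0, hφ1, hA0] at hN01
  linarith

/-- Every `y ∈ dom F` with `F(y) ≤ F(x)`, `y ≠ x` satisfies
`ω(‖y − x‖_x)/‖y − x‖_x ≤ λ(x)`; consequently, if `λ(x) < 1` the sublevel set is bounded. -/
theorem sublevel_set_bounded
    (n : ℕ) (D : Set (Fin n → ℝ)) (f : (Fin n → ℝ) → ℝ)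
    (f' : (Fin n → ℝ) → Fin n → ℝ)
    (f'' : (Fin n → ℝ) → Matrix (Fin n) (Fin n) ℝ)
    (hf : StdSelfConcordantOn D f)
    (hgrad : ∀ x ∈ D, HasFDerivAt f (dotCLM (f' x)) x)
    (hhess : ∀ x ∈ D,
      HasFDerivAt f' (LinearMap.toContinuousLinearMap (f'' x).mulVecLin) x)
    (g : (Fin n → ℝ) → EReal) (hg_proper : EProper g)
    (hg_lsc : LowerSemicontinuous g) (hg_conv : EConvex g)
    (x v : Fin n → ℝ) (hxD : x ∈ D) (hxg : g x ≠ ⊤)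
    (hv : ESubgradAt g v x) (hpd : (f'' x).PosDef) :
    (∀ y : Fin n → ℝ, y ∈ D → g y ≠ ⊤ → Fext D f g y ≤ Fext D f g x → y ≠ x →
        omega (mNorm (f'' x) (y - x)) / mNorm (f'' x) (y - x) ≤
          mDualNorm (f'' x) (f' x + v)) ∧
      (mDualNorm (f'' x) (f' x + v) < 1 →
        Bornology.IsBounded
          {y : Fin n → ℝ | (y ∈ D ∧ g y ≠ ⊤) ∧ Fext D f g y ≤ Fext D f g x}) := by
  classical
  have hpart1 : ∀ y : Fin n → ℝ, y ∈ D → g y ≠ ⊤ → Fext D f g y ≤ Fext D f g x → y ≠ x →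
      omega (mNorm (f'' x) (y - x)) / mNorm (f'' x) (y - x) ≤
        mDualNorm (f'' x) (f' x + v) := by
    intro y hyD hyg hFle hyne
    have hune : y - x ≠ 0 := sub_ne_zero.2 hyne
    have hpos : 0 < (y - x) ⬝ᵥ (f'' x).mulVec (y - x) := pd_dot_pos hpd hune
    have hkey := sc_lower_bound D f f' f'' hf hgrad hhess x y hxD hyD hpos
    have hgbx := hg_proper.1 x
    have hgby := hg_proper.1 y
    set G : ℝ := (g x).toReal with hG
    have hGx : g x = (G : EReal) := (EReal.coe_toReal hxg hgbx).symm
    set Gy : ℝ := (g y).toReal with hGy'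
    have hGy : g y = (Gy : EReal) := (EReal.coe_toReal hyg hgby).symm
    have hF : f y + Gy ≤ f x + G := by
      have h := hFle
      rw [Fext, Fext, if_pos hyD, if_pos hxD, hGx, hGy,
        ← EReal.coe_add, ← EReal.coe_add] at h
      exact_mod_cast h
    have hsub := hv.2 y
    rw [hGx, hGy, ← EReal.coe_add] at hsub
    have hsub' : G + v ⬝ᵥ (y - x) ≤ Gy := by exact_mod_cast hsub
    have hcs := abs_dot_le hpd (f' x + v) (y - x)
    have hr0 : 0 < mNorm (f'' x) (y - x) := Real.sqrt_pos.2 hpos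
    have hdot : (f' x + v) ⬝ᵥ (y - x) = f' x ⬝ᵥ (y - x) + v ⬝ᵥ (y - x) :=
      add_dotProduct _ _ _
    have h2 : -((f' x + v) ⬝ᵥ (y - x)) ≤ |(f' x + v) ⬝ᵥ (y - x)| := neg_le_abs _
    rw [div_le_iff₀ hr0]
    rw [hdot] at h2 hcs
    linarith
  refine ⟨hpart1, ?_⟩
  intro hlam
  obtain ⟨μ, hμ, hμle⟩ := pd_lower hpd
  set lam : ℝ := mDualNorm (f'' x) (f' x + v) with hlamdef
  set ε : ℝ := 1 - lam with hεdef
  have hε : 0 < ε := by simp only [hεdef]; linarith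
  set R : ℝ := max 1 (8 / ε ^ 2) with hR
  have hR1 : (1:ℝ) ≤ R := le_max_left _ _
  have hRy : ∀ y ∈ {y : Fin n → ℝ | (y ∈ D ∧ g y ≠ ⊤) ∧ Fext D f g y ≤ Fext D f g x},
      mNorm (f'' x) (y - x) ≤ R := by
    intro y hy
    obtain ⟨⟨hyD, hyg⟩, hFle⟩ := hy
    rcases eq_or_ne y x with heq | hyne
    · rw [heq, sub_self]
      have h0 : mNorm (f'' x) 0 = 0 := by simp [mNorm]
      rw [h0]; linarith
    · have h1 := hpart1 y hyD hyg hFle hyne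
      set r : ℝ := mNorm (f'' x) (y - x) with hrdef
      have hr0 : 0 < r := Real.sqrt_pos.2 (pd_dot_pos hpd (sub_ne_zero.2 hyne))
      have hω : omega r ≤ lam * r := (div_le_iff₀ hr0).1 h1
      have hlog : ε * r ≤ Real.log (1 + r) := by
        rw [omega] at hω
        simp only [hεdef]
        nlinarith
      set s : ℝ := Real.sqrt (1 + r) with hsdef
      have hs2 : s ^ 2 = 1 + r := Real.sq_sqrt (by linarith)
      have hs0 : 0 < s := Real.sqrt_pos.2 (by linarith)
      have hlog2 : Real.log (1 + r) ≤ 2 * s := by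
        have heq : Real.log (1 + r) = 2 * Real.log s := by
          rw [← hs2, Real.log_pow]
          push_cast; ring
        have := Real.log_le_sub_one_of_pos hs0
        rw [heq]; linarith
      by_contra hcon
      push_neg at hcon
      have hr1 : 1 < r := lt_of_le_of_lt hR1 hcon
      have hr8 : 8 / ε ^ 2 < r := lt_of_le_of_lt (le_max_right _ _) hcon
      have h8 : 8 < ε ^ 2 * r := by
        rw [div_lt_iff₀ (by positivity)] at hr8
        linarith
      have hεr : 0 ≤ ε * r := by positivity
      have hsq : (ε * r) ^ 2 ≤ (2 * s) ^ 2 := by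
        apply pow_le_pow_left₀ hεr (by linarith)
      have hmul : 8 * r < ε ^ 2 * r * r := by nlinarith
      nlinarith [hsq, hs2, hmul, hr1]
  have hnorm : ∀ y ∈ {y : Fin n → ℝ | (y ∈ D ∧ g y ≠ ⊤) ∧ Fext D f g y ≤ Fext D f g x},
      ‖y - x‖ ≤ Real.sqrt (R ^ 2 / μ) := by
    intro y hy
    have h1 := hRy y hy
    have hnn : 0 ≤ (y - x) ⬝ᵥ (f'' x).mulVec (y - x) :=
      psd_dot_nonneg hpd.posSemidef _
    have h2 : mNorm (f'' x) (y - x) ^ 2 = (y - x) ⬝ᵥ (f'' x).mulVec (y - x) :=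
      Real.sq_sqrt hnn
    have h3 : (y - x) ⬝ᵥ (f'' x).mulVec (y - x) ≤ R ^ 2 := by
      rw [← h2]
      have : 0 ≤ mNorm (f'' x) (y - x) := Real.sqrt_nonneg _
      nlinarith
    have h4 := hμle (y - x)
    have h5 : ‖y - x‖ ^ 2 ≤ R ^ 2 / μ := by
      rw [le_div_iff₀ hμ]
      nlinarith
    calc ‖y - x‖ = Real.sqrt (‖y - x‖ ^ 2) := (Real.sqrt_sq (norm_nonneg _)).symm
      _ ≤ Real.sqrt (R ^ 2 / μ) := Real.sqrt_le_sqrt h5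
  apply (Metric.isBounded_closedBall :
    Bornology.IsBounded (Metric.closedBall x (Real.sqrt (R ^ 2 / μ)))).subset
  intro y hy
  rw [Metric.mem_closedBall, dist_eq_norm]
  exact hnorm y hy
end
end

section
/- Let f be standard self-concordant on an open convex set dom f ⊆ ℝⁿ, g : ℝⁿ → ℝ ∪ {+∞} proper, lower semicontinuous and convex, F := f + g. Suppose x* ∈ dom F satisfies the optimality condition 0 ∈ ∇f(x*) + ∂g(x*) and ∇²f(x*) is positive definite. Then for every x ∈ dom F, F(x) − F(x*) ≥ ω(‖x − x*‖_{x*}), where ω(t) := t − ln(1+t). In particular, the minimizer of F is unique. -/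
open Matrix Set Filter Topology

noncomputable section

variable {n : ℕ}

/-- Along `[0,b]`, if `ψ > 0` and `|ψ'| ≤ 2 ψ^{3/2}`, then `ψ(t)^{-1/2} ≤ ψ(0)^{-1/2} + t`. -/
lemma stepB (ψ : ℝ → ℝ) (b : ℝ) (hb01 : b ∈ Icc (0:ℝ) 1)
    (hψ : ∀ t ∈ Icc (0:ℝ) 1, DifferentiableAt ℝ ψ t)
    (hsc : ∀ t ∈ Icc (0:ℝ) 1, |deriv ψ t| ≤ 2 * ψ t ^ ((3:ℝ)/2))
    (hpos : ∀ t ∈ Icc (0:ℝ) b, 0 < ψ t) :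
    ∀ t ∈ Icc (0:ℝ) b, (Real.sqrt (ψ t))⁻¹ ≤ (Real.sqrt (ψ 0))⁻¹ + t := by
  have hsub : Icc (0:ℝ) b ⊆ Icc 0 1 := Icc_subset_Icc le_rfl hb01.2
  set ρ : ℝ → ℝ := fun s => (Real.sqrt (ψ s))⁻¹ - s with hρdef
  have key : ∀ s ∈ Icc (0:ℝ) b, HasDerivAt ρ
      (-(1 / (2 * Real.sqrt (ψ s)) * deriv ψ s) / (Real.sqrt (ψ s)) ^ 2 - 1) s := by
    intro s hs
    have hp := hpos s hs
    have h1 : HasDerivAt ψ (deriv ψ s) s := (hψ s (hsub hs)).hasDerivAt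
    have h2 : HasDerivAt (fun u => Real.sqrt (ψ u))
        (1 / (2 * Real.sqrt (ψ s)) * deriv ψ s) s :=
      (Real.hasDerivAt_sqrt hp.ne').comp s h1
    have h3 := h2.fun_inv (Real.sqrt_ne_zero'.2 hp)
    simpa [hρdef, neg_div] using h3.fun_sub (hasDerivAt_id' s)
  have hanti : AntitoneOn ρ (Icc (0:ℝ) b) := by
    apply antitoneOn_of_deriv_nonpos (convex_Icc 0 b)
    · exact fun s hs => ((key s hs).continuousAt).continuousWithinAt
    · intro s hs
      rw [interior_Icc] at hs
      exact ((key s (Ioo_subset_Icc_self hs)).differentiableAt).differentiableWithinAt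
    · intro s hs
      rw [interior_Icc] at hs
      have hs' := Ioo_subset_Icc_self hs
      rw [(key s hs').deriv]
      set a := Real.sqrt (ψ s) with hadef
      have ha : 0 < a := Real.sqrt_pos.2 (hpos s hs')
      have hcube : ψ s ^ ((3:ℝ)/2) = a ^ 3 := by
        rw [hadef, Real.sqrt_eq_rpow, ← Real.rpow_natCast (ψ s ^ ((1:ℝ)/2)) 3,
          ← Real.rpow_mul (hpos s hs').le]
        norm_num
      have habs := hsc s (hsub hs')
      rw [hcube] at habs
      have hnd : -(deriv ψ s) ≤ 2 * a ^ 3 := (neg_le_of_neg_le (abs_le.1 habs).1)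
      have hmain : -(1 / (2 * a) * deriv ψ s) / a ^ 2 ≤ 1 := by
        rw [div_le_one (by positivity)]
        have h5 : -(1 / (2 * a) * deriv ψ s) = 1 / (2 * a) * (-(deriv ψ s)) := by ring
        rw [h5]
        calc 1 / (2 * a) * (-(deriv ψ s)) ≤ 1 / (2 * a) * (2 * a ^ 3) :=
              mul_le_mul_of_nonneg_left hnd (by positivity)
          _ = a ^ 2 := by field_simp
      linarith
  intro t ht
  have := hanti (⟨le_rfl, hb01.1⟩ : (0:ℝ) ∈ Icc 0 b) ht ht.1
  simp only [hρdef] at this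
  linarith

lemma oneDim (φ φd ψ : ℝ → ℝ)
    (hφ : ∀ t ∈ Icc (0:ℝ) 1, HasDerivAt φ (φd t) t)
    (hφd : ∀ t ∈ Icc (0:ℝ) 1, HasDerivAt φd (ψ t) t)
    (hψ : ∀ t ∈ Icc (0:ℝ) 1, DifferentiableAt ℝ ψ t)
    (hsc : ∀ t ∈ Icc (0:ℝ) 1, |deriv ψ t| ≤ 2 * ψ t ^ ((3:ℝ)/2))
    (h0 : 0 < ψ 0) :
    omega (Real.sqrt (ψ 0)) ≤ φ 1 - φ 0 - φd 0 := by
  set r := Real.sqrt (ψ 0) with hrdef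
  have hr : 0 < r := Real.sqrt_pos.2 h0
  -- positivity of ψ on [0,1]
  have Hpos : ∀ t ∈ Icc (0:ℝ) 1, 0 < ψ t := by
    by_contra hcon
    push_neg at hcon
    obtain ⟨t₁, ht₁, hle₁⟩ := hcon
    set Z : Set ℝ := Icc (0:ℝ) 1 ∩ ψ ⁻¹' (Iic 0) with hZdef
    have hZc : IsClosed Z :=
      ContinuousOn.preimage_isClosed_of_isClosed
        (fun s hs => ((hψ s hs).continuousAt).continuousWithinAt) isClosed_Icc isClosed_Iic
    have hZne : Z.Nonempty := ⟨t₁, ht₁, hle₁⟩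
    have hZbdd : BddBelow Z := ⟨0, fun z hz => hz.1.1⟩
    set t₀ := sInf Z with ht₀def
    have ht₀ : t₀ ∈ Z := hZc.csInf_mem hZne hZbdd
    have ht₀Icc : t₀ ∈ Icc (0:ℝ) 1 := ht₀.1
    have ht₀le : ψ t₀ ≤ 0 := ht₀.2
    have ht₀pos : 0 < t₀ := by
      rcases lt_or_eq_of_le ht₀Icc.1 with h | h
      · exact h
      · exfalso; rw [← h] at ht₀le; linarith
    have hlt : ∀ s ∈ Ico (0:ℝ) t₀, 0 < ψ s := by
      intro s hs
      by_contra hc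
      push_neg at hc
      have hsZ : s ∈ Z := ⟨⟨hs.1, hs.2.le.trans ht₀Icc.2⟩, hc⟩
      have := csInf_le hZbdd hsZ
      linarith [hs.2]
    set c : ℝ := ((r⁻¹ + 1)⁻¹) ^ 2 with hcdef
    have hc : 0 < c := by positivity
    have hboundc : ∀ s ∈ Ico (0:ℝ) t₀, c ≤ ψ s := by
      intro s hs
      have hpos' : ∀ u ∈ Icc (0:ℝ) s, 0 < ψ u := fun u hu =>
        hlt u ⟨hu.1, lt_of_le_of_lt hu.2 hs.2⟩
      have hs1 : s ∈ Icc (0:ℝ) 1 := ⟨hs.1, (hs.2.le.trans ht₀Icc.2)⟩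
      have := stepB ψ s hs1 hψ hsc hpos' s ⟨hs.1, le_rfl⟩
      -- (√ψs)⁻¹ ≤ r⁻¹ + s ≤ r⁻¹ + 1
      have h2 : (Real.sqrt (ψ s))⁻¹ ≤ r⁻¹ + 1 := by
        refine this.trans ?_; rw [hrdef]; linarith [hs1.2]
      have ha : 0 < Real.sqrt (ψ s) := Real.sqrt_pos.2 (hpos' s ⟨hs.1, le_rfl⟩)
      have h3 : (r⁻¹ + 1)⁻¹ ≤ Real.sqrt (ψ s) := by
        rw [inv_le_comm₀ (by positivity) ha]
        exact h2
      have h4 : ((r⁻¹ + 1)⁻¹) ^ 2 ≤ (Real.sqrt (ψ s)) ^ 2 :=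
        pow_le_pow_left₀ (by positivity) h3 2
      rwa [Real.sq_sqrt (hpos' s ⟨hs.1, le_rfl⟩).le] at h4
    -- limit
    have hcont : Tendsto ψ (𝓝[Ico 0 t₀] t₀) (𝓝 (ψ t₀)) :=
      ((hψ t₀ ht₀Icc).continuousAt.continuousWithinAt).tendsto
    have hne : (𝓝[Ico (0:ℝ) t₀] t₀).NeBot := by
      apply mem_closure_iff_nhdsWithin_neBot.1
      rw [closure_Ico ht₀pos.ne]
      exact ⟨ht₀pos.le, le_rfl⟩
    have : c ≤ ψ t₀ :=
      ge_of_tendsto hcont (eventually_mem_nhdsWithin.mono (fun s hs => hboundc s hs))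
    linarith
  -- the quantitative bound ψ t ≥ (r/(1+tr))²
  have Hbound : ∀ t ∈ Icc (0:ℝ) 1, r ^ 2 / (1 + t * r) ^ 2 ≤ ψ t := by
    intro t ht
    have h1 := stepB ψ 1 ⟨zero_le_one, le_rfl⟩ hψ hsc Hpos t ht
    have ha : 0 < Real.sqrt (ψ t) := Real.sqrt_pos.2 (Hpos t ht)
    have hden : (0:ℝ) < 1 + t * r := by nlinarith [ht.1, hr]
    have h2 : r / (1 + t * r) ≤ Real.sqrt (ψ t) := by
      rw [div_le_iff₀ hden]
      have h3 : Real.sqrt (ψ t) * ((Real.sqrt (ψ 0))⁻¹ + t) ≥ 1 := by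
        calc (1:ℝ) = Real.sqrt (ψ t) * (Real.sqrt (ψ t))⁻¹ := (mul_inv_cancel₀ ha.ne').symm
          _ ≤ Real.sqrt (ψ t) * ((Real.sqrt (ψ 0))⁻¹ + t) :=
              mul_le_mul_of_nonneg_left h1 ha.le
      have hrr : r * r⁻¹ = 1 := mul_inv_cancel₀ hr.ne'
      nlinarith [h3, hr, ha]
    have h4 := pow_le_pow_left₀ (by positivity) h2 2
    rwa [div_pow, Real.sq_sqrt (Hpos t ht).le] at h4
  -- χ := φd t - φd 0 - r + r/(1+tr) is nonneg on [0,1]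
  set χ : ℝ → ℝ := fun t => φd t - φd 0 - r + r / (1 + t * r) with hχdef
  have hden : ∀ t ∈ Icc (0:ℝ) 1, (0:ℝ) < 1 + t * r := by
    intro t ht; nlinarith [ht.1, hr]
  have hlin : ∀ t : ℝ, HasDerivAt (fun s : ℝ => 1 + s * r) r t := by
    intro t; simpa using ((hasDerivAt_id t).mul_const r).const_add 1
  have hχd : ∀ t ∈ Icc (0:ℝ) 1, HasDerivAt χ (ψ t - r ^ 2 / (1 + t * r) ^ 2) t := by
    intro t ht
    have h2 : HasDerivAt (fun s => r / (1 + s * r)) (-(r * r) / (1 + t * r) ^ 2) t := by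
      have := (hasDerivAt_const t r).fun_div (hlin t) (hden t ht).ne'
      simpa using this
    have := (((hφd t ht).sub_const (φd 0)).sub_const r).fun_add h2
    refine this.congr_deriv (Eq.symm ?_)
    ring
  have hχmono : MonotoneOn χ (Icc (0:ℝ) 1) := by
    apply monotoneOn_of_deriv_nonneg (convex_Icc 0 1)
    · exact fun s hs => ((hχd s hs).continuousAt).continuousWithinAt
    · intro s hs; rw [interior_Icc] at hs
      exact ((hχd s (Ioo_subset_Icc_self hs)).differentiableAt).differentiableWithinAt
    · intro s hs; rw [interior_Icc] at hs
      have hs' := Ioo_subset_Icc_self hs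
      rw [(hχd s hs').deriv]
      have := Hbound s hs'
      linarith
  have hχ0 : χ 0 = 0 := by simp [hχdef]
  have hχnonneg : ∀ t ∈ Icc (0:ℝ) 1, 0 ≤ χ t := by
    intro t ht
    have := hχmono (⟨le_rfl, zero_le_one⟩ : (0:ℝ) ∈ Icc (0:ℝ) 1) ht ht.1
    rw [hχ0] at this; exact this
  -- η := φ t - φ 0 - t φd 0 - t r + log(1+tr)
  set η : ℝ → ℝ := fun t => φ t - φ 0 - t * φd 0 - t * r + Real.log (1 + t * r) with hηdef
  have hηd : ∀ t ∈ Icc (0:ℝ) 1, HasDerivAt η (χ t) t := by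
    intro t ht
    have hlog : HasDerivAt (fun s => Real.log (1 + s * r)) ((1 + t * r)⁻¹ * r) t :=
      by have := (Real.hasDerivAt_log (hden t ht).ne').comp t (hlin t); exact this
    have := ((((hφ t ht).sub_const (φ 0)).fun_sub ((hasDerivAt_id t).mul_const (φd 0))).fun_sub
      ((hasDerivAt_id t).mul_const r)).fun_add hlog
    refine this.congr_deriv (Eq.symm ?_)
    rw [hχdef]
    field_simp
  have hηmono : MonotoneOn η (Icc (0:ℝ) 1) := by
    apply monotoneOn_of_deriv_nonneg (convex_Icc 0 1)
    · exact fun s hs => ((hηd s hs).continuousAt).continuousWithinAt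
    · intro s hs; rw [interior_Icc] at hs
      exact ((hηd s (Ioo_subset_Icc_self hs)).differentiableAt).differentiableWithinAt
    · intro s hs; rw [interior_Icc] at hs
      rw [(hηd s (Ioo_subset_Icc_self hs)).deriv]
      exact hχnonneg s (Ioo_subset_Icc_self hs)
  have hη0 : η 0 = 0 := by simp [hηdef]
  have hη1 : 0 ≤ η 1 := by
    have := hηmono (⟨le_rfl, zero_le_one⟩ : (0:ℝ) ∈ Icc (0:ℝ) 1)
      (⟨zero_le_one, le_rfl⟩ : (1:ℝ) ∈ Icc (0:ℝ) 1) zero_le_one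
    rw [hη0] at this; exact this
  simp only [hηdef, one_mul] at hη1
  rw [omega]
  linarith

/-- If `0 ∈ ∇f(x*) + ∂g(x*)` and `∇²f(x*) ≻ 0`, then for every `x ∈ dom F`,
`F(x) − F(x*) ≥ ω(‖x − x*‖_{x*})`; in particular the minimizer of `F` is unique. -/
theorem objective_gap_lower_bound
    (n : ℕ) (D : Set (Fin n → ℝ)) (f : (Fin n → ℝ) → ℝ)
    (f' : (Fin n → ℝ) → Fin n → ℝ)
    (f'' : (Fin n → ℝ) → Matrix (Fin n) (Fin n) ℝ)
    (hf : StdSelfConcordantOn D f)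
    (hgrad : ∀ x ∈ D, HasFDerivAt f (dotCLM (f' x)) x)
    (hhess : ∀ x ∈ D,
      HasFDerivAt f' (LinearMap.toContinuousLinearMap (f'' x).mulVecLin) x)
    (g : (Fin n → ℝ) → EReal) (hg_proper : EProper g)
    (hg_lsc : LowerSemicontinuous g) (hg_conv : EConvex g)
    (xs : Fin n → ℝ) (hxsD : xs ∈ D)
    (hopt : ESubgradAt g (-(f' xs)) xs) (hpd : (f'' xs).PosDef) :
    (∀ x : Fin n → ℝ, x ∈ D → g x ≠ ⊤ →
        ((omega (mNorm (f'' xs) (x - xs)) : ℝ) : EReal) ≤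
          Fext D f g x - Fext D f g xs) ∧
      ∀ y : Fin n → ℝ, (∀ z, Fext D f g y ≤ Fext D f g z) → y = xs := by
  obtain ⟨hDopen, hDconv, hfconv, hfC3, hfsc⟩ := hf
  have hgxs_ne_top : g xs ≠ ⊤ := hopt.1
  have hgxs_ne_bot : g xs ≠ ⊥ := hg_proper.1 xs
  set gxs : ℝ := (g xs).toReal with hgxsdef
  have hgxs : (gxs : EReal) = g xs := EReal.coe_toReal hgxs_ne_top hgxs_ne_bot
  have hFxs : Fext D f g xs = ((f xs + gxs : ℝ) : EReal) := by
    rw [Fext, if_pos hxsD, EReal.coe_add, hgxs]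
  -- the core self-concordance inequality
  have main : ∀ x ∈ D, omega (mNorm (f'' xs) (x - xs)) ≤
      f x - f xs - f' xs ⬝ᵥ (x - xs) := by
    intro x hxD
    by_cases hx : x = xs
    · subst hx
      simp [mNorm, omega]
    · set u : Fin n → ℝ := x - xs with hu
      have hu0 : u ≠ 0 := sub_ne_zero.2 hx
      set L : ℝ → Fin n → ℝ := fun t => xs + t • u with hLdef
      have hT01 : ∀ t ∈ Icc (0:ℝ) 1, L t ∈ D := by
        intro t ht
        have he : L t = (1 - t) • xs + t • x := by
          rw [hLdef]; simp only [hu]; module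
        rw [he]
        exact hDconv hxsD hxD (by linarith [ht.2]) ht.1 (by ring)
      have hline : ∀ t : ℝ, HasDerivAt L u t := fun t => by
        have := ((hasDerivAt_id t).smul_const u).const_add xs; rw [one_smul] at this; exact this
      set T : Set ℝ := L ⁻¹' D with hTdef
      have hTopen : IsOpen T := hDopen.preimage (by fun_prop)
      have hTsub : Icc (0:ℝ) 1 ⊆ T := fun t ht => hT01 t ht
      set φ : ℝ → ℝ := fun t => f (L t) with hφdef
      set φd : ℝ → ℝ := fun t => f' (L t) ⬝ᵥ u with hφddef
      have hφ : ∀ t ∈ T, HasDerivAt φ (φd t) t := by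
        intro t ht
        exact (hgrad _ ht).comp_hasDerivAt t (hline t)
      have hφd' : ∀ t ∈ T, HasDerivAt φd (u ⬝ᵥ (f'' (L t)).mulVec u) t := by
        intro t ht
        have h1 : HasDerivAt (fun s => f' (L s)) ((f'' (L t)).mulVec u) t := by
          have := (hhess _ ht).comp_hasDerivAt t (hline t)
          simpa [Matrix.mulVecLin, Function.comp_def] using this
        have h2 := (dotCLM u).hasFDerivAt.comp_hasDerivAt t h1
        have he : φd = fun s => dotCLM u (f' (L s)) := by
          funext s
          show f' (L s) ⬝ᵥ u = u ⬝ᵥ f' (L s)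
          exact dotProduct_comm _ _
        rw [he]
        exact h2
      have hφC3 : ContDiffOn ℝ 3 φ T :=
        hfC3.comp ((contDiff_const.add (contDiff_id.smul contDiff_const)).contDiffOn)
          (fun t ht => ht)
      set ψ : ℝ → ℝ := deriv (deriv φ) with hψdef
      have hψeq : ∀ t ∈ T, ψ t = u ⬝ᵥ (f'' (L t)).mulVec u := by
        intro t ht
        have hev : deriv φ =ᶠ[𝓝 t] φd :=
          Filter.eventuallyEq_of_mem (hTopen.mem_nhds ht) (fun s hs => (hφ s hs).deriv)
        rw [hψdef]
        exact hev.deriv_eq.trans (hφd' t ht).deriv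
      have hψdiff : ∀ t ∈ T, DifferentiableAt ℝ ψ t := by
        have hC1 : ContDiffOn ℝ 1 ψ T :=
          (hφC3.deriv_of_isOpen hTopen (m := 2) (by norm_num)).deriv_of_isOpen hTopen (m := 1) (by norm_num)
        intro t ht
        exact (hC1.differentiableOn one_ne_zero t ht).differentiableAt (hTopen.mem_nhds ht)
      have h2eq : iteratedDeriv 2 φ = ψ := by
        rw [show (2:ℕ) = 1 + 1 from rfl, iteratedDeriv_succ, iteratedDeriv_one]
      have h3eq : iteratedDeriv 3 φ = deriv ψ := by
        rw [show (3:ℕ) = 2 + 1 from rfl, iteratedDeriv_succ, h2eq]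
      have hsc' : ∀ t ∈ Icc (0:ℝ) 1, |deriv ψ t| ≤ 2 * ψ t ^ ((3:ℝ)/2) := by
        intro t ht
        have := hfsc xs hxsD u t (hT01 t ht)
        rw [show (fun s : ℝ => f (xs + s • u)) = φ from rfl] at this
        rw [h3eq, h2eq] at this
        exact this
      have h0T : (0:ℝ) ∈ T := hTsub ⟨le_rfl, zero_le_one⟩
      have hL0 : L 0 = xs := by simp [hLdef]
      have hψ0 : ψ 0 = u ⬝ᵥ (f'' xs).mulVec u := by
        rw [hψeq 0 h0T, hL0]
      have hψ0pos : 0 < ψ 0 := by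
        rw [hψ0]; simpa using hpd.dotProduct_mulVec_pos hu0
      have hkey := oneDim φ φd ψ (fun t ht => hφ t (hTsub ht))
        (fun t ht => by rw [hψeq t (hTsub ht)] at *; exact hφd' t (hTsub ht))
        (fun t ht => hψdiff t (hTsub ht)) hsc' hψ0pos
      have hL1 : L 1 = x := by rw [hLdef]; simp [hu]
      have hφ1 : φ 1 = f x := by rw [hφdef]; simp [hL1]
      have hφ0 : φ 0 = f xs := by rw [hφdef]; simp [hL0]
      have hφd0 : φd 0 = f' xs ⬝ᵥ u := by rw [hφddef]; simp [hL0]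
      have hmn : mNorm (f'' xs) (x - xs) = Real.sqrt (ψ 0) := by
        rw [mNorm, hψ0, hu]
      rw [hmn]
      rw [hφ1, hφ0, hφd0] at hkey
      exact hkey
  -- part 1 in real form
  have part1r : ∀ x ∈ D, g x ≠ ⊤ →
      omega (mNorm (f'' xs) (x - xs)) ≤ (f x + (g x).toReal) - (f xs + gxs) := by
    intro x hxD hgx_ne_top
    have hgx_ne_bot : g x ≠ ⊥ := hg_proper.1 x
    have hgx : ((g x).toReal : EReal) = g x := EReal.coe_toReal hgx_ne_top hgx_ne_bot
    have hsub := hopt.2 x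
    rw [← hgxs, ← hgx, ← EReal.coe_add, EReal.coe_le_coe_iff] at hsub
    rw [neg_dotProduct] at hsub
    have h1 := main x hxD
    linarith
  have part1 : ∀ x : Fin n → ℝ, x ∈ D → g x ≠ ⊤ →
      ((omega (mNorm (f'' xs) (x - xs)) : ℝ) : EReal) ≤
        Fext D f g x - Fext D f g xs := by
    intro x hxD hgx_ne_top
    have hgx_ne_bot : g x ≠ ⊥ := hg_proper.1 x
    have hgx : ((g x).toReal : EReal) = g x := EReal.coe_toReal hgx_ne_top hgx_ne_bot
    have hFx : Fext D f g x = ((f x + (g x).toReal : ℝ) : EReal) := by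
      rw [Fext, if_pos hxD, EReal.coe_add, hgx]
    rw [hFx, hFxs, ← EReal.coe_sub, EReal.coe_le_coe_iff]
    exact part1r x hxD hgx_ne_top
  refine ⟨part1, ?_⟩
  intro y hy
  have h := hy xs
  rw [hFxs] at h
  have hyD : y ∈ D := by
    by_contra hc
    rw [Fext, if_neg hc] at h
    exact (EReal.coe_lt_top _).not_ge h
  have hgy_ne_top : g y ≠ ⊤ := by
    intro hc
    rw [Fext, if_pos hyD, hc] at h
    rw [show ((f y : EReal) + ⊤) = ⊤ by simp] at h
    exact (EReal.coe_lt_top _).not_ge h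
  have hgy_ne_bot : g y ≠ ⊥ := hg_proper.1 y
  have hgy : ((g y).toReal : EReal) = g y := EReal.coe_toReal hgy_ne_top hgy_ne_bot
  have hFy : Fext D f g y = ((f y + (g y).toReal : ℝ) : EReal) := by
    rw [Fext, if_pos hyD, EReal.coe_add, hgy]
  rw [hFy, EReal.coe_le_coe_iff] at h
  have h2 := part1r y hyD hgy_ne_top
  have h3 : omega (mNorm (f'' xs) (y - xs)) ≤ 0 := by linarith
  by_contra hne
  have hu0 : y - xs ≠ 0 := sub_ne_zero.2 hne
  have hq : 0 < (y - xs) ⬝ᵥ (f'' xs).mulVec (y - xs) := by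
    simpa using hpd.dotProduct_mulVec_pos hu0
  have hqn : 0 < mNorm (f'' xs) (y - xs) := Real.sqrt_pos.2 hq
  set q := mNorm (f'' xs) (y - xs)
  have hlog : Real.log (1 + q) < q := by
    have := Real.log_lt_sub_one_of_pos (by linarith : (0:ℝ) < 1 + q)
      (by intro hc; rw [add_eq_left] at hc; linarith)
    linarith
  rw [omega] at h3
  linarith
end
end

section
/- Let f be standard self-concordant on an open convex set dom f ⊆ ℝⁿ, g : ℝⁿ → ℝ ∪ {+∞} proper, lower semicontinuous and convex, F := f + g with minimum value F(x*). Let {x^k} be generated by the damped proximal-Newton scheme x^{k+1} := x^k + (1+λ_k)⁻¹ d^k, where d^k := P^g_{∇²f(x^k)}(∇²f(x^k)x^k − ∇f(x^k)) − x^k and λ_k := ‖d^k‖_{x^k}, each ∇²f(x^k) being positive definite. Fix σ ∈ (0,1). If λ_j ≥ σ for all j = 0,…,k−1, then F(x*) ≤ F(x^k) ≤ F(x⁰) − k·ω(σ); consequently the number of iterations needed to reach an iterate with λ_k < σ is at most ⌊(F(x⁰) − F(x*))/ω(σ)⌋ + 1, where ω(t) := t − ln(1+t). -/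
open Matrix Set Filter Topology

noncomputable section

variable {n : ℕ}

section AuxSelfConcordant

lemma rpow_three_halves {a : ℝ} (ha : 0 < a) : a ^ ((3:ℝ)/2) = a * Real.sqrt a := by
  rw [Real.sqrt_eq_rpow, show (3:ℝ)/2 = 1 + 1/2 by norm_num, Real.rpow_add ha, Real.rpow_one]

/-- Core 1-D self-concordance step bound. -/
lemma sc_core {I : Set ℝ} {φ : ℝ → ℝ} {lam α : ℝ}
    (hI : IsOpen I) (hJI : Icc 0 α ⊆ I) (hφ : ContDiffOn ℝ 3 φ I)
    (hlam : 0 < lam) (hα : 0 ≤ α) (hal : α * lam < 1)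
    (hu0 : iteratedDeriv 2 φ 0 = lam ^ 2)
    (hSC : ∀ t ∈ I, |iteratedDeriv 3 φ t| ≤ 2 * iteratedDeriv 2 φ t ^ ((3:ℝ)/2)) :
    φ α ≤ φ 0 + deriv φ 0 * α + omegaStar (lam * α) := by
  set u : ℝ → ℝ := iteratedDeriv 2 φ with hu_def
  have h0J : (0:ℝ) ∈ Icc 0 α := ⟨le_refl 0, hα⟩
  -- smoothness of deriv φ and u on I
  have hd1 : ContDiffOn ℝ 2 (deriv φ) I := hφ.deriv_of_isOpen hI (by norm_num)
  have hd2 : ContDiffOn ℝ 1 (deriv (deriv φ)) I := hd1.deriv_of_isOpen hI (by norm_num)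
  have hu_eq : u = deriv (deriv φ) := by
    rw [hu_def, show (2:ℕ) = 1 + 1 from rfl, iteratedDeriv_succ, iteratedDeriv_one]
  have hu_cd : ContDiffOn ℝ 1 u I := hu_eq ▸ hd2
  have hu_cont : ContinuousOn u I := hu_cd.continuousOn
  have hu_has : ∀ t ∈ I, HasDerivAt u (iteratedDeriv 3 φ t) t := by
    intro t ht
    have hdiff : DifferentiableAt ℝ u t :=
      (hu_cd.differentiableOn (by norm_num)).differentiableAt (hI.mem_nhds ht)
    have := hdiff.hasDerivAt
    rwa [show iteratedDeriv 3 φ = deriv u from iteratedDeriv_succ]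
  -- Lipschitz estimate for ψ = (√u)⁻¹ on subintervals where u > 0
  have key : ∀ b : ℝ, b ∈ Icc 0 α → (∀ s ∈ Icc 0 b, 0 < u s) →
      |(Real.sqrt (u b))⁻¹ - (Real.sqrt (u 0))⁻¹| ≤ b := by
    intro b hb hpos
    have hKI : Icc 0 b ⊆ I := fun s hs => hJI ⟨hs.1, hs.2.trans hb.2⟩
    have hmvt := Convex.norm_image_sub_le_of_norm_hasDerivWithin_le
      (f := fun t => (Real.sqrt (u t))⁻¹)
      (f' := fun t => -(iteratedDeriv 3 φ t / (2 * Real.sqrt (u t))) / (Real.sqrt (u t))^2)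
      (s := Icc 0 b) (C := 1) ?_ ?_ (convex_Icc 0 b) ⟨le_refl 0, hb.1⟩ ⟨hb.1, le_refl b⟩
    · simpa [abs_of_nonneg hb.1] using hmvt
    · intro t ht
      have hut : 0 < u t := hpos t ht
      have h1 : HasDerivAt (fun s => Real.sqrt (u s))
          (iteratedDeriv 3 φ t / (2 * Real.sqrt (u t))) t :=
        (hu_has t (hKI ht)).sqrt (ne_of_gt hut)
      exact (h1.inv (Real.sqrt_ne_zero'.2 hut)).hasDerivWithinAt
    · intro t ht
      have hut : 0 < u t := hpos t ht
      have hst : 0 < Real.sqrt (u t) := Real.sqrt_pos.2 hut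
      have hb3 := hSC t (hKI ht)
      rw [rpow_three_halves hut] at hb3
      have h32 : 0 < u t * Real.sqrt (u t) := by positivity
      rw [Real.norm_eq_abs, abs_div, abs_neg, abs_div, abs_of_nonneg (by positivity : (0:ℝ) ≤ 2 * Real.sqrt (u t)), abs_of_nonneg (by positivity : (0:ℝ) ≤ (Real.sqrt (u t))^2)]
      rw [div_div, div_le_one (by positivity)]
      calc |iteratedDeriv 3 φ t| ≤ 2 * (u t * Real.sqrt (u t)) := hb3
        _ = 2 * Real.sqrt (u t) * (Real.sqrt (u t))^2 := by
            have hs2 : (Real.sqrt (u t))^2 = u t := Real.sq_sqrt hut.le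
            rw [hs2]; ring
  have hψ0 : (Real.sqrt (u 0))⁻¹ = lam⁻¹ := by
    rw [hu0, Real.sqrt_sq hlam.le]
  -- positivity of u on [0, α]
  have hupos : ∀ t ∈ Icc 0 α, 0 < u t := by
    by_contra hcon
    push_neg at hcon
    set S : Set ℝ := {t | t ∈ Icc 0 α ∧ u t ≤ 0} with hS_def
    have hSne : S.Nonempty := by obtain ⟨t, ht, hut⟩ := hcon; exact ⟨t, ht, hut⟩
    have hScl : IsClosed S := by
      have : S = Icc 0 α ∩ u ⁻¹' (Iic 0) := by ext t; simp [hS_def, and_comm]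
      rw [this]
      exact (hu_cont.mono hJI).preimage_isClosed_of_isClosed isClosed_Icc isClosed_Iic
    have hSbdd : BddBelow S := ⟨0, fun t ht => ht.1.1⟩
    set t₀ := sInf S with ht₀_def
    have ht₀S : t₀ ∈ S := hScl.csInf_mem hSne hSbdd
    have ht₀pos : 0 < t₀ := by
      rcases lt_or_eq_of_le ht₀S.1.1 with h | h
      · exact h
      · exfalso; have := ht₀S.2; rw [← h, hu0] at this; nlinarith
    have hbefore : ∀ s, s ∈ Ico 0 t₀ → 0 < u s := by
      intro s hs
      by_contra hc
      push_neg at hc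
      have : s ∈ S := ⟨⟨hs.1, hs.2.le.trans ht₀S.1.2⟩, hc⟩
      exact absurd (csInf_le hSbdd this) (not_le.2 hs.2)
    set m : ℝ := ((lam⁻¹ + t₀)⁻¹)^2 with hm_def
    have hmpos : 0 < m := by positivity
    have hlb : ∀ b ∈ Ico 0 t₀, m ≤ u b := by
      intro b hb
      have hbIcc : b ∈ Icc 0 α := ⟨hb.1, hb.2.le.trans ht₀S.1.2⟩
      have hk := key b hbIcc (fun s hs => hbefore s ⟨hs.1, lt_of_le_of_lt hs.2 hb.2⟩)
      rw [hψ0] at hk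
      have hub : 0 < u b := hbefore b hb
      have h1 : (Real.sqrt (u b))⁻¹ ≤ lam⁻¹ + t₀ := by
        have := abs_le.1 hk
        nlinarith [this.2, hb.2]
      have h2 : (lam⁻¹ + t₀)⁻¹ ≤ Real.sqrt (u b) :=
        (inv_le_comm₀ (by positivity) (Real.sqrt_pos.2 hub)).2 h1
      calc m = ((lam⁻¹ + t₀)⁻¹)^2 := rfl
        _ ≤ (Real.sqrt (u b))^2 := by
            apply sq_le_sq' _ h2
            have hp : (0:ℝ) < (lam⁻¹ + t₀)⁻¹ := by positivity
            linarith [Real.sqrt_nonneg (u b)]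
        _ = u b := Real.sq_sqrt hub.le
    -- limit: u t₀ ≥ m > 0, contradiction
    have hcontAt : ContinuousAt u t₀ :=
      hu_cont.continuousAt (hI.mem_nhds (hJI ht₀S.1))
    have htend : Tendsto u (𝓝[<] t₀) (𝓝 (u t₀)) :=
      hcontAt.continuousWithinAt.tendsto
    have hIoo : Ioo 0 t₀ ∈ 𝓝[<] t₀ := Ioo_mem_nhdsLT_of_mem ⟨ht₀pos, le_refl t₀⟩
    have : m ≤ u t₀ := ge_of_tendsto htend
      (eventually_of_mem hIoo (fun b hb => hlb b ⟨hb.1.le, hb.2⟩))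
    nlinarith [ht₀S.2]
  -- upper bound u t ≤ (lam / (1 - lam * t))^2 on [0, α]
  have hαinv : α < lam⁻¹ := by
    rw [inv_eq_one_div, lt_div_iff₀ hlam]; exact hal
  have h1mt : ∀ t ∈ Icc 0 α, 0 < 1 - lam * t := by
    intro t ht; nlinarith [ht.1, ht.2]
  have huub : ∀ t ∈ Icc 0 α, u t ≤ (lam / (1 - lam * t))^2 := by
    intro t ht
    have hut := hupos t ht
    have hk := key t ht (fun s hs => hupos s ⟨hs.1, hs.2.trans ht.2⟩)
    rw [hψ0] at hk
    have h1t : 0 < lam⁻¹ - t := by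
      have := ht.2; linarith [hαinv]
    have hψge : lam⁻¹ - t ≤ (Real.sqrt (u t))⁻¹ := by
      have := (abs_le.1 hk).1; have h0t := ht.1; linarith
    have hsq : Real.sqrt (u t) ≤ (lam⁻¹ - t)⁻¹ :=
      (le_inv_comm₀ h1t (Real.sqrt_pos.2 hut)).1 hψge
    have heq : (lam⁻¹ - t)⁻¹ = lam / (1 - lam * t) := by
      rw [show lam⁻¹ - t = (1 - lam * t)/lam by field_simp, inv_div]
    calc u t = (Real.sqrt (u t))^2 := (Real.sq_sqrt hut.le).symm
      _ ≤ ((lam⁻¹ - t)⁻¹)^2 := pow_le_pow_left₀ (Real.sqrt_nonneg _) hsq 2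
      _ = (lam / (1 - lam * t))^2 := by rw [heq]
  -- integration
  set A := deriv φ 0 with hA_def
  have hφdiff : ∀ t ∈ I, HasDerivAt φ (deriv φ t) t := by
    intro t ht
    exact ((hφ.differentiableOn (by norm_num)).differentiableAt (hI.mem_nhds ht)).hasDerivAt
  have hd1has : ∀ t ∈ I, HasDerivAt (deriv φ) (u t) t := by
    intro t ht
    have h := ((hd1.differentiableOn (by norm_num)).differentiableAt
      (hI.mem_nhds ht)).hasDerivAt
    rw [hu_eq]; exact h
  set r : ℝ → ℝ := fun t => deriv φ t - (A - lam + lam * (1 - lam * t)⁻¹) with hr_def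
  have hinv_has : ∀ t ∈ Icc 0 α, HasDerivAt (fun s => (1 - lam * s)⁻¹)
      (lam * ((1 - lam * t)⁻¹)^2) t := by
    intro t ht
    have h1t := h1mt t ht
    have hb : HasDerivAt (fun s => 1 - lam * s) (-lam) t := by
      simpa using ((hasDerivAt_id t).const_mul lam).const_sub 1
    have h := hb.inv h1t.ne'
    refine h.congr_deriv ?_; symm
    rw [neg_neg, inv_pow, div_eq_mul_inv, mul_comm]
  have hr_has : ∀ t ∈ Icc 0 α, HasDerivAt r (u t - (lam / (1 - lam * t))^2) t := by
    intro t ht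
    have h := (hd1has t (hJI ht)).sub
      (((hinv_has t ht).const_mul lam).const_add (A - lam))
    refine h.congr_deriv ?_; symm
    have h1t := h1mt t ht
    rw [div_pow]; field_simp
  have hr_anti : AntitoneOn r (Icc 0 α) := by
    apply antitoneOn_of_deriv_nonpos (convex_Icc 0 α)
    · intro t ht
      exact (hr_has t ht).differentiableAt.continuousAt.continuousWithinAt
    · intro t ht
      rw [interior_Icc] at ht
      exact (hr_has t ⟨ht.1.le, ht.2.le⟩).differentiableAt.differentiableWithinAt
    · intro t ht
      rw [interior_Icc] at ht
      have htI : t ∈ Icc 0 α := ⟨ht.1.le, ht.2.le⟩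
      rw [(hr_has t htI).deriv]
      have := huub t htI
      linarith
  have hr0 : r 0 = 0 := by
    simp [hr_def, hA_def]
  have hr_nonpos : ∀ t ∈ Icc 0 α, r t ≤ 0 := by
    intro t ht
    have := hr_anti h0J ht ht.1
    rwa [hr0] at this
  set χ : ℝ → ℝ := fun t => φ t - (φ 0 + A * t + omegaStar (lam * t)) with hχ_def
  have hχ_has : ∀ t ∈ Icc 0 α, HasDerivAt χ (r t) t := by
    intro t ht
    have h1t := h1mt t ht
    have hb : HasDerivAt (fun s : ℝ => 1 - lam * s) (-lam) t := by
      simpa using ((hasDerivAt_id t).const_mul lam).const_sub 1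
    have hlog : HasDerivAt (fun s => Real.log (1 - lam * s)) (-lam / (1 - lam * t)) t :=
      hb.log h1t.ne'
    have hω : HasDerivAt (fun s => omegaStar (lam * s))
        (-lam - (-lam / (1 - lam * t))) t := by
      have hm : HasDerivAt (fun s : ℝ => -(lam * s)) (-lam) t := by
        have h0 := (((hasDerivAt_id t).const_mul lam)).neg; rw [mul_one] at h0; exact h0
      exact hm.sub hlog
    have h := (hφdiff t (hJI ht)).sub
      (((hasDerivAt_id t).const_mul A).const_add (φ 0)  |>.add hω)
    refine h.congr_deriv ?_; symm
    rw [hr_def]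
    field_simp
    ring
  have hχ_anti : AntitoneOn χ (Icc 0 α) := by
    apply antitoneOn_of_deriv_nonpos (convex_Icc 0 α)
    · intro t ht
      exact (hχ_has t ht).differentiableAt.continuousAt.continuousWithinAt
    · intro t ht
      rw [interior_Icc] at ht
      exact (hχ_has t ⟨ht.1.le, ht.2.le⟩).differentiableAt.differentiableWithinAt
    · intro t ht
      rw [interior_Icc] at ht
      have htI : t ∈ Icc 0 α := ⟨ht.1.le, ht.2.le⟩
      rw [(hχ_has t htI).deriv]
      exact hr_nonpos t htI
  have hχ0 : χ 0 = 0 := by simp [hχ_def, omegaStar]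
  have hfin : χ α ≤ 0 := by
    have := hχ_anti h0J ⟨hα, le_refl α⟩ hα
    rwa [hχ0] at this
  rw [hχ_def] at hfin
  simp only at hfin
  linarith

lemma sc_step {D : Set (Fin n → ℝ)} {f : (Fin n → ℝ) → ℝ}
    {f' : (Fin n → ℝ) → Fin n → ℝ} {f'' : (Fin n → ℝ) → Matrix (Fin n) (Fin n) ℝ}
    (hf : StdSelfConcordantOn D f)
    (hgrad : ∀ x ∈ D, HasFDerivAt f (dotCLM (f' x)) x)
    (hhess : ∀ x ∈ D,
      HasFDerivAt f' (LinearMap.toContinuousLinearMap (f'' x).mulVecLin) x)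
    {x d : Fin n → ℝ} {lam : ℝ} (hx : x ∈ D) (hlam : 0 < lam)
    (hquad : d ⬝ᵥ (f'' x).mulVec d = lam ^ 2)
    (hx1 : x + (1 + lam)⁻¹ • d ∈ D) :
    f (x + (1 + lam)⁻¹ • d) ≤
      f x + (1 + lam)⁻¹ * (f' x ⬝ᵥ d) + omegaStar (lam * (1 + lam)⁻¹) := by
  set α : ℝ := (1 + lam)⁻¹ with hα_def
  set c : ℝ → (Fin n → ℝ) := fun t => x + t • d with hc_def
  set φ : ℝ → ℝ := fun s : ℝ => f (x + s • d) with hφ_def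
  set I : Set ℝ := {t | x + t • d ∈ D} with hI_def
  have hIc : ∀ t ∈ I, c t ∈ D := fun t ht => ht
  have hcont_c : Continuous c := by
    apply continuous_const.add (continuous_id.smul continuous_const)
  have hI_open : IsOpen I := hf.1.preimage (by exact hcont_c)
  have hI_conv : Convex ℝ I := by
    intro t1 ht1 t2 ht2 a b ha hb hab
    have : x + (a • t1 + b • t2) • d = a • (x + t1 • d) + b • (x + t2 • d) := by
      have h1 : a • (x + t1 • d) + b • (x + t2 • d)
          = (a + b) • x + (a * t1 + b * t2) • d := by
        simp only [smul_add, add_smul, smul_smul]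
        abel
      rw [h1, hab, one_smul, smul_eq_mul, smul_eq_mul]
    show x + (a • t1 + b • t2) • d ∈ D
    rw [this]
    exact hf.2.1 ht1 ht2 ha hb hab
  have h0I : (0:ℝ) ∈ I := by show x + (0:ℝ) • d ∈ D; simpa using hx
  have hαI : α ∈ I := hx1
  have hα_pos : 0 < α := by positivity
  have hJI : Icc 0 α ⊆ I := hI_conv.ordConnected.out h0I hαI
  have hφ_cd : ContDiffOn ℝ 3 φ I := by
    have hc_cd : ContDiff ℝ 3 c := by
      apply contDiff_const.add (contDiff_id.smul contDiff_const)
    exact (hf.2.2.2.1).comp hc_cd.contDiffOn hIc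
  have hc_has : ∀ t : ℝ, HasDerivAt c d t := by
    intro t
    have h0 := ((hasDerivAt_id t).smul_const d).const_add x; rw [one_smul] at h0; exact h0
  have hφ_has : ∀ t ∈ I, HasDerivAt φ (d ⬝ᵥ f' (c t)) t := by
    intro t ht
    have := (hgrad (c t) (hIc t ht)).comp_hasDerivAt t (hc_has t)
    have he : dotCLM (f' (c t)) d = d ⬝ᵥ f' (c t) := by
      simp [dotCLM, dotProduct_comm]
    rw [← he]
    exact this
  set p1 : ℝ → ℝ := fun t => d ⬝ᵥ f' (c t) with hp1_def
  have hp1_has : ∀ t ∈ I, HasDerivAt p1 (d ⬝ᵥ (f'' (c t)).mulVec d) t := by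
    intro t ht
    have h2 := (hhess (c t) (hIc t ht)).comp_hasDerivAt t (hc_has t)
    have h3 := (dotCLM d).hasFDerivAt.comp_hasDerivAt t h2
    have he : dotCLM d ((LinearMap.toContinuousLinearMap (f'' (c t)).mulVecLin) d)
        = d ⬝ᵥ (f'' (c t)).mulVec d := by
      simp [dotCLM]
    rw [← he]
    exact h3
  have hderiv_eq : ∀ t ∈ I, deriv φ t = p1 t := fun t ht => (hφ_has t ht).deriv
  have hu0 : iteratedDeriv 2 φ 0 = lam ^ 2 := by
    have hev : deriv φ =ᶠ[𝓝 0] p1 :=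
      eventually_of_mem (hI_open.mem_nhds h0I) hderiv_eq
    rw [show (2:ℕ) = 1 + 1 from rfl, iteratedDeriv_succ, iteratedDeriv_one]
    rw [hev.deriv_eq, (hp1_has 0 h0I).deriv]
    have : c 0 = x := by simp [hc_def]
    rw [this, hquad]
  have hSC : ∀ t ∈ I, |iteratedDeriv 3 φ t| ≤ 2 * iteratedDeriv 2 φ t ^ ((3:ℝ)/2) :=
    fun t ht => hf.2.2.2.2 x hx d t ht
  have hal : α * lam < 1 := by
    rw [hα_def, inv_mul_eq_div, div_lt_one (by linarith)]
    linarith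
  have hcore := sc_core hI_open hJI hφ_cd hlam hα_pos.le hal hu0 hSC
  have hd0 : deriv φ 0 = f' x ⬝ᵥ d := by
    rw [hderiv_eq 0 h0I, hp1_def]
    simp [hc_def, dotProduct_comm]
  rw [hd0] at hcore
  have hφα : φ α = f (x + α • d) := rfl
  have hφ0 : φ 0 = f x := by simp [hφ_def]
  rw [hφα, hφ0] at hcore
  linarith [hcore]

lemma prox_decrease {H : Matrix (Fin n) (Fin n) ℝ} (hH : Hᵀ = H)
    {g : (Fin n → ℝ) → EReal} (hgbot : ∀ y, g y ≠ ⊥) (hg_conv : EConvex g)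
    {x d gvec : Fin n → ℝ} (hgx : g x ≠ ⊤) (hQd : 0 ≤ d ⬝ᵥ H.mulVec d)
    (hprox : IsProxPt H g (H.mulVec x - gvec) (x + d)) :
    g (x + d) ≠ ⊤ ∧
    (g (x + d)).toReal ≤ (g x).toReal - gvec ⬝ᵥ d - d ⬝ᵥ H.mulVec d := by
  set u : Fin n → ℝ := H.mulVec x - gvec with hu_def
  set p : Fin n → ℝ := x + d with hp_def
  set q : (Fin n → ℝ) → ℝ := fun z => 1 / 2 * (z ⬝ᵥ H.mulVec z) - u ⬝ᵥ z with hq_def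
  have hsym : ∀ v w : Fin n → ℝ, v ⬝ᵥ H.mulVec w = w ⬝ᵥ H.mulVec v := by
    intro v w
    rw [Matrix.dotProduct_mulVec, ← Matrix.mulVec_transpose, hH, dotProduct_comm]
  -- g p ≠ ⊤
  have hgp_ne_top : g p ≠ ⊤ := by
    intro htop
    have h := hprox x
    rw [proxObj, proxObj, htop, EReal.top_add_of_ne_bot (EReal.coe_ne_bot _)] at h
    have hgxr : g x = ((g x).toReal : EReal) := (EReal.coe_toReal hgx (hgbot x)).symm
    rw [hgxr, ← EReal.coe_add] at h
    exact (EReal.coe_ne_top _) (top_le_iff.1 h)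
  set a : ℝ := (g p).toReal with ha_def
  set b : ℝ := (g x).toReal with hb_def
  have hgp_coe : g p = (a : EReal) := (EReal.coe_toReal hgp_ne_top (hgbot p)).symm
  have hgx_coe : g x = (b : EReal) := (EReal.coe_toReal hgx (hgbot x)).symm
  refine ⟨hgp_ne_top, ?_⟩
  set Qd : ℝ := d ⬝ᵥ H.mulVec d with hQd_def
  -- key inequality for each t ∈ (0,1]
  have key : ∀ t : ℝ, 0 < t → t ≤ 1 →
      a ≤ b - gvec ⬝ᵥ d - Qd + t / 2 * Qd := by
    intro t ht0 ht1
    set y : Fin n → ℝ := x + (1 - t) • d with hy_def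
    have hy_comb : y = (1 - t) • p + t • x := by
      rw [hy_def, hp_def]
      have : (1 - t) • (x + d) + t • x = ((1 - t) + t) • x + (1 - t) • d := by
        simp only [smul_add, add_smul]; abel
      rw [this]; norm_num
    have hconv := hg_conv p x (1 - t) t (by linarith) ht0.le (by ring)
    rw [← hy_comb] at hconv
    rw [hgp_coe, hgx_coe, ← EReal.coe_mul, ← EReal.coe_mul, ← EReal.coe_add] at hconv
    have hgy_ne_top : g y ≠ ⊤ := fun htop => by
      rw [htop] at hconv; exact (EReal.coe_ne_top _) (top_le_iff.1 hconv)
    set e : ℝ := (g y).toReal with he_def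
    have hgy_coe : g y = (e : EReal) := (EReal.coe_toReal hgy_ne_top (hgbot y)).symm
    rw [hgy_coe, EReal.coe_le_coe_iff] at hconv
    -- prox inequality
    have hpr := hprox y
    rw [proxObj, proxObj, hgp_coe, hgy_coe, ← EReal.coe_add, ← EReal.coe_add,
      EReal.coe_le_coe_iff] at hpr
    -- quadratic expansion
    have hyp : y = p - t • d := by
      rw [hy_def, hp_def, sub_smul, one_smul]
      abel
    have hexp : y ⬝ᵥ H.mulVec y =
        p ⬝ᵥ H.mulVec p - 2 * t * (d ⬝ᵥ H.mulVec p) + t ^ 2 * Qd := by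
      rw [hyp]
      rw [Matrix.mulVec_sub, Matrix.mulVec_smul]
      rw [sub_dotProduct, dotProduct_sub, dotProduct_sub]
      rw [smul_dotProduct, dotProduct_smul, dotProduct_smul]
      rw [hsym p d]
      simp only [smul_dotProduct, dotProduct_smul, smul_eq_mul, hQd_def]
      ring
    have huy : u ⬝ᵥ y = u ⬝ᵥ p - t * (u ⬝ᵥ d) := by
      rw [hyp, dotProduct_sub, dotProduct_smul, smul_eq_mul]
    have hud : u ⬝ᵥ d = d ⬝ᵥ H.mulVec x - gvec ⬝ᵥ d := by
      rw [hu_def, sub_dotProduct, dotProduct_comm (H.mulVec x) d]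
    have hdp : d ⬝ᵥ H.mulVec p = d ⬝ᵥ H.mulVec x + Qd := by
      rw [hp_def, Matrix.mulVec_add, dotProduct_add, hQd_def]
    -- combine : a + q p ≤ e + q y ≤ (1-t) a + t b + q y
    have h1 : a + (1 / 2 * (p ⬝ᵥ H.mulVec p) - u ⬝ᵥ p) ≤
        e + (1 / 2 * (y ⬝ᵥ H.mulVec y) - u ⬝ᵥ y) := hpr
    rw [hexp, huy, hud, hdp] at h1
    nlinarith [h1, hconv]
  -- take t → 0
  by_contra hcon
  push_neg at hcon
  set δ : ℝ := a - (b - gvec ⬝ᵥ d - Qd) with hδ_def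
  have hδ : 0 < δ := by rw [hδ_def]; linarith
  have ht := key (min 1 (δ / (Qd + 1))) (lt_min one_pos (by positivity)) (min_le_left _ _)
  have hle : min 1 (δ / (Qd + 1)) ≤ δ / (Qd + 1) := min_le_right _ _
  have h2 : min 1 (δ / (Qd + 1)) / 2 * Qd < δ := by
    have h3 : min 1 (δ / (Qd + 1)) / 2 * Qd ≤ δ / (Qd + 1) * Qd := by
      have := min_le_right 1 (δ / (Qd + 1))
      nlinarith [lt_min one_pos (show (0:ℝ) < δ / (Qd + 1) by positivity)]
    have h4 : δ / (Qd + 1) * Qd < δ := by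
      rw [div_mul_eq_mul_div, div_lt_iff₀ (by linarith)]
      nlinarith
    linarith
  linarith

lemma omega_pos' {s : ℝ} (h : 0 < s) : 0 < omega s := by
  have h1 : (0:ℝ) < 1 + s := by linarith
  have hlog := Real.log_lt_sub_one_of_pos h1 (by linarith : (1:ℝ) + s ≠ 1)
  rw [omega]; linarith

lemma omega_mono' {s t : ℝ} (h0 : 0 ≤ s) (hst : s ≤ t) : omega s ≤ omega t := by
  have h1 : (0:ℝ) < 1 + s := by linarith
  have h2 : (0:ℝ) < 1 + t := by linarith
  have hlog : Real.log (1+t) - Real.log (1+s) ≤ t - s := by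
    rw [← Real.log_div h2.ne' h1.ne']
    have hx := Real.log_le_sub_one_of_pos (div_pos h2 h1)
    have hd : (1+t)/(1+s) - 1 = (t-s)/(1+s) := by field_simp; ring
    have h3 : (t-s)/(1+s) ≤ t - s := by
      rw [div_le_iff₀ h1]; nlinarith
    linarith
  rw [omega, omega]; linarith

lemma step_identity {lam : ℝ} (h : 0 < lam) :
    omegaStar (lam * (1 + lam)⁻¹) - (1 + lam)⁻¹ * lam ^ 2 = -(omega lam) := by
  have h1 : (0:ℝ) < 1 + lam := by linarith
  have he : 1 - lam * (1 + lam)⁻¹ = (1 + lam)⁻¹ := by field_simp; ring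
  rw [omegaStar, omega, he, Real.log_inv]
  field_simp
  ring

open scoped Classical in
lemma Fext_eq {D : Set (Fin n → ℝ)} {f : (Fin n → ℝ) → ℝ} {g : (Fin n → ℝ) → EReal}
    {z : Fin n → ℝ} (hz : z ∈ D) (hgtop : g z ≠ ⊤) (hgbot : g z ≠ ⊥) :
    Fext D f g z = ((f z + (g z).toReal : ℝ) : EReal) := by
  rw [Fext, if_pos hz, EReal.coe_add, EReal.coe_toReal hgtop hgbot]

end AuxSelfConcordant

/-- Along the damped proximal-Newton iterations, if `λ_j ≥ σ` for
`j = 0,…,k−1` then `F(x*) ≤ F(x^k) ≤ F(x⁰) − k ω(σ)`; consequently at most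
`⌊(F(x⁰) − F(x*))/ω(σ)⌋ + 1` iterations are needed to reach `λ_k < σ`. -/
theorem damped_newton_iteration_bound
    (n : ℕ) (D : Set (Fin n → ℝ)) (f : (Fin n → ℝ) → ℝ)
    (f' : (Fin n → ℝ) → Fin n → ℝ)
    (f'' : (Fin n → ℝ) → Matrix (Fin n) (Fin n) ℝ)
    (hf : StdSelfConcordantOn D f)
    (hgrad : ∀ x ∈ D, HasFDerivAt f (dotCLM (f' x)) x)
    (hhess : ∀ x ∈ D,
      HasFDerivAt f' (LinearMap.toContinuousLinearMap (f'' x).mulVecLin) x)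
    (g : (Fin n → ℝ) → EReal) (hg_proper : EProper g)
    (hg_lsc : LowerSemicontinuous g) (hg_conv : EConvex g)
    (x d : ℕ → Fin n → ℝ) (lam : ℕ → ℝ)
    (hdom : ∀ k, x k ∈ D ∧ g (x k) ≠ ⊤)
    (hpd : ∀ k, (f'' (x k)).PosDef)
    (hprox : ∀ k,
      IsProxPt (f'' (x k)) g ((f'' (x k)).mulVec (x k) - f' (x k)) (x k + d k))
    (hlam : ∀ k, lam k = mNorm (f'' (x k)) (d k))
    (hupd : ∀ k, x (k + 1) = x k + (1 + lam k)⁻¹ • d k)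
    (xs : Fin n → ℝ) (hxsD : xs ∈ D) (hxsg : g xs ≠ ⊤)
    (hxs_min : ∀ y, Fext D f g xs ≤ Fext D f g y)
    (sigma : ℝ) (hs0 : 0 < sigma) (hs1 : sigma < 1) :
    (∀ k : ℕ, (∀ j < k, sigma ≤ lam j) →
        Fext D f g xs ≤ Fext D f g (x k) ∧
          Fext D f g (x k) ≤ Fext D f g (x 0) - (((k : ℝ) * omega sigma : ℝ) : EReal)) ∧
      ∃ k : ℕ,
        k ≤ ⌊(Fext D f g (x 0) - Fext D f g xs).toReal / omega sigma⌋₊ + 1 ∧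
          lam k < sigma := by
  have hgbot := hg_proper.1
  set Freal : ℕ → ℝ := fun k => f (x k) + (g (x k)).toReal with hFreal_def
  set Fs : ℝ := f xs + (g xs).toReal with hFs_def
  have hFext_k : ∀ k, Fext D f g (x k) = (Freal k : EReal) := fun k =>
    Fext_eq (hdom k).1 (hdom k).2 (hgbot _)
  have hFext_s : Fext D f g xs = (Fs : EReal) := Fext_eq hxsD hxsg (hgbot _)
  have hlow : ∀ k, Fs ≤ Freal k := by
    intro k
    have h := hxs_min (x k)
    rw [hFext_s, hFext_k k, EReal.coe_le_coe_iff] at h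
    exact h
  -- one step decrease
  have one_step : ∀ k, 0 < lam k → Freal (k+1) ≤ Freal k - omega (lam k) := by
    intro k hlk
    set H : Matrix (Fin n) (Fin n) ℝ := f'' (x k) with hH_def
    set dk : Fin n → ℝ := d k with hdk_def
    set L : ℝ := lam k with hL_def
    set al : ℝ := (1 + L)⁻¹ with hal_def
    have hH : Hᵀ = H := by
      have := (hpd k).1
      rw [Matrix.IsHermitian] at this
      simpa using this
    have hQd : 0 ≤ dk ⬝ᵥ H.mulVec dk := by
      have := (hpd k).posSemidef.dotProduct_mulVec_nonneg dk
      simpa using this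
    have hquad : dk ⬝ᵥ H.mulVec dk = L ^ 2 := by
      rw [hL_def, hlam k, mNorm, Real.sq_sqrt hQd]
    have hx1 : x k + al • dk ∈ D := by
      have := (hdom (k+1)).1
      rwa [hupd k] at this
    have hfstep := sc_step hf hgrad hhess (hdom k).1 hlk hquad hx1
    have hpr := prox_decrease hH hgbot hg_conv (hdom k).2 hQd (hprox k)
    -- convexity of g at the new point
    have hal0 : 0 < al := by rw [hal_def]; positivity
    have hal1 : al ≤ 1 := by
      rw [hal_def]
      rw [inv_le_one_iff₀]; right; linarith
    have hcomb : al • (x k + dk) + (1 - al) • (x k) = x k + al • dk := by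
      have : al • (x k + dk) + (1 - al) • (x k) = (al + (1 - al)) • (x k) + al • dk := by
        simp only [smul_add, add_smul, sub_smul, one_smul]; abel
      rw [this]; norm_num
    have hconv := hg_conv (x k + dk) (x k) al (1 - al) hal0.le (by linarith) (by ring)
    rw [hcomb] at hconv
    set a : ℝ := (g (x k + dk)).toReal with ha_def
    set b : ℝ := (g (x k)).toReal with hb_def
    have hga : g (x k + dk) = (a : EReal) := (EReal.coe_toReal hpr.1 (hgbot _)).symm
    have hgb : g (x k) = (b : EReal) := (EReal.coe_toReal (hdom k).2 (hgbot _)).symm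
    have hgnew_ne_top : g (x k + al • dk) ≠ ⊤ := by
      have := (hdom (k+1)).2
      rwa [hupd k] at this
    set c : ℝ := (g (x k + al • dk)).toReal with hc_def
    have hgc : g (x k + al • dk) = (c : EReal) := (EReal.coe_toReal hgnew_ne_top (hgbot _)).symm
    rw [hga, hgb, hgc, ← EReal.coe_mul, ← EReal.coe_mul, ← EReal.coe_add,
      EReal.coe_le_coe_iff] at hconv
    -- combine
    have hid := step_identity hlk
    have h2 := hpr.2
    have h3 := mul_le_mul_of_nonneg_left h2 hal0.le
    have hnew : Freal (k+1) = f (x k + al • dk) + c := by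
      rw [hFreal_def]
      simp only
      rw [hupd k]
    rw [hnew, hFreal_def]
    simp only
    nlinarith [hfstep, hconv, h3, hid]
  -- part 1
  have part1 : ∀ k : ℕ, (∀ j < k, sigma ≤ lam j) →
      Freal k ≤ Freal 0 - (k : ℝ) * omega sigma := by
    intro k
    induction k with
    | zero => intro _; simp
    | succ m ih =>
      intro hj
      have h1 := ih (fun j hjm => hj j (hjm.trans (Nat.lt_succ_self m)))
      have hσm := hj m (Nat.lt_succ_self m)
      have h2 := one_step m (lt_of_lt_of_le hs0 hσm)
      have h3 := omega_mono' hs0.le hσm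
      push_cast
      push_cast at h1
      linarith
  constructor
  · intro k hk
    refine ⟨hxs_min _, ?_⟩
    rw [hFext_k k, hFext_k 0, ← EReal.coe_sub, EReal.coe_le_coe_iff]
    exact part1 k hk
  · by_contra hcon
    push_neg at hcon
    set N : ℕ := ⌊(Fext D f g (x 0) - Fext D f g xs).toReal / omega sigma⌋₊ with hN_def
    have hallj : ∀ j < N + 2, sigma ≤ lam j := by
      intro j hj
      exact hcon j (by omega)
    have h1 := part1 (N + 2) hallj
    have h2 := hlow (N + 2)
    have hω := omega_pos' hs0
    have htoReal : (Fext D f g (x 0) - Fext D f g xs).toReal = Freal 0 - Fs := by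
      rw [hFext_k 0, hFext_s, ← EReal.coe_sub, EReal.toReal_coe]
    have hdivineq : ((N : ℝ) + 2) ≤ (Freal 0 - Fs) / omega sigma := by
      rw [le_div_iff₀ hω]
      push_cast at h1
      linarith
    have hfl : N + 2 ≤ ⌊(Freal 0 - Fs) / omega sigma⌋₊ := by
      apply Nat.le_floor
      push_cast
      exact hdivineq
    rw [← htoReal] at hfl
    rw [← hN_def] at hfl
    omega
end
end
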